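/- arXiv:2006.04741 — 8 statements merged into one kernel-verified Lean document; each statement's English description precedes it below -/
import Mathlib

section
/- Let F be a field of characteristic 2 and let q and q' be totally singular quadratic forms over F on finite-dimensional F-vector spaces V and V' with dim V = dim V'. Then q and q' are isometric if and only if they have the same value sets, i.e. {q(x) : x ∈ V} = {q'(y) : y ∈ V'}. -/
/-- Over a field of characteristic 2, two totally singular quadratic forms
on spaces of the same finite dimension are isometric iff they have the same value sets. -/
theorem stmt_0 {F : Type*} [Field F] [CharP F 2]
    {V V' : Type*} [AddCommGroup V] [Module F V] [FiniteDimensional F V]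
    [AddCommGroup V'] [Module F V'] [FiniteDimensional F V']
    (q : QuadraticForm F V) (q' : QuadraticForm F V')
    (hq : ∀ x y : V, QuadraticMap.polar (⇑q) x y = 0)
    (hq' : ∀ x y : V', QuadraticMap.polar (⇑q') x y = 0)
    (hdim : Module.finrank F V = Module.finrank F V') :
    (∃ e : V ≃ₗ[F] V', ∀ x : V, q' (e x) = q x) ↔ Set.range ⇑q = Set.range ⇑q' := by
  constructor
  · rintro ⟨e, he⟩
    ext a
    constructor
    · rintro ⟨x, rfl⟩; exact ⟨e x, he x⟩
    · rintro ⟨y, rfl⟩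
      exact ⟨e.symm y, by rw [← he (e.symm y), e.apply_symm_apply]⟩
  · intro hr
    -- additivity of q and q'
    have qadd : ∀ x y : V, q (x + y) = q x + q y := by
      intro x y
      have h := hq x y
      rw [QuadraticMap.polar, sub_sub, sub_eq_zero] at h
      exact h
    have q'add : ∀ x y : V', q' (x + y) = q' x + q' y := by
      intro x y
      have h := hq' x y
      rw [QuadraticMap.polar, sub_sub, sub_eq_zero] at h
      exact h
    have two0 : (2 : F) = 0 := CharP.cast_eq_zero F 2
    have negV : ∀ x : V, -x = x := by
      intro x
      have : x + x = 0 := by rw [← two_smul F x, two0, zero_smul]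
      exact neg_eq_of_add_eq_zero_left this
    have negV' : ∀ x : V', -x = x := by
      intro x
      have : x + x = 0 := by rw [← two_smul F x, two0, zero_smul]
      exact neg_eq_of_add_eq_zero_left this
    have addF : ∀ a : F, a + a = 0 := fun a => by
      rw [← two_mul, two0, zero_mul]
    have qsub : ∀ x y : V, q (x - y) = q x + q y := by
      intro x y
      rw [sub_eq_add_neg, negV y, qadd]
    have q'sub : ∀ x y : V', q' (x - y) = q' x + q' y := by
      intro x y
      rw [sub_eq_add_neg, negV' y, q'add]
    -- kernels
    set K : Submodule F V :=
      { carrier := {x | q x = 0}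
        add_mem' := fun ha hb => by simp only [Set.mem_setOf_eq] at *; rw [qadd, ha, hb, add_zero]
        zero_mem' := by simp
        smul_mem' := fun c x hx => by
          simp only [Set.mem_setOf_eq] at *
          rw [QuadraticMap.map_smul, hx, smul_zero] } with hK
    set K' : Submodule F V' :=
      { carrier := {x | q' x = 0}
        add_mem' := fun ha hb => by simp only [Set.mem_setOf_eq] at *; rw [q'add, ha, hb, add_zero]
        zero_mem' := by simp
        smul_mem' := fun c x hx => by
          simp only [Set.mem_setOf_eq] at *
          rw [QuadraticMap.map_smul, hx, smul_zero] } with hK'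
    obtain ⟨W, hW⟩ := Submodule.exists_isCompl K
    obtain ⟨W', hW'⟩ := Submodule.exists_isCompl K'
    -- injectivity of q on W and q' on W'
    have injW : ∀ w₁ w₂ : W, q (w₁ : V) = q (w₂ : V) → w₁ = w₂ := by
      intro w₁ w₂ h
      have h1 : q ((w₁ : V) - w₂) = 0 := by rw [qsub, h, addF]
      have h2 : ((w₁ : V) - w₂) ∈ K ⊓ W := ⟨h1, W.sub_mem w₁.2 w₂.2⟩
      rw [hW.inf_eq_bot, Submodule.mem_bot, sub_eq_zero] at h2
      exact Subtype.ext h2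
    have injW' : ∀ w₁ w₂ : W', q' (w₁ : V') = q' (w₂ : V') → w₁ = w₂ := by
      intro w₁ w₂ h
      have h1 : q' ((w₁ : V') - w₂) = 0 := by rw [q'sub, h, addF]
      have h2 : ((w₁ : V') - w₂) ∈ K' ⊓ W' := ⟨h1, W'.sub_mem w₁.2 w₂.2⟩
      rw [hW'.inf_eq_bot, Submodule.mem_bot, sub_eq_zero] at h2
      exact Subtype.ext h2
    -- every value of q' is attained on W'
    have surjW' : ∀ a ∈ Set.range ⇑q', ∃ w' : W', q' (w' : V') = a := by
      rintro a ⟨y, rfl⟩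
      obtain ⟨k, w, hk, hw, hkw⟩ := Submodule.codisjoint_iff_exists_add_eq.mp hW'.codisjoint y
      refine ⟨⟨w, hw⟩, ?_⟩
      have : q' y = q' k + q' w := by rw [← hkw, q'add]
      rw [this, hk, zero_add]
    -- value of q on W lies in range q'
    have mem' : ∀ w : W, q (w : V) ∈ Set.range ⇑q' := fun w => hr ▸ ⟨(w : V), rfl⟩
    -- define f : W → W'
    choose f hf using fun w : W => surjW' (q (w : V)) (mem' w)
    have fadd : ∀ w₁ w₂ : W, f (w₁ + w₂) = f w₁ + f w₂ := by
      intro w₁ w₂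
      apply injW'
      rw [hf, Submodule.coe_add, Submodule.coe_add, qadd, q'add, hf, hf]
    have fsmul : ∀ (c : F) (w : W), f (c • w) = c • f w := by
      intro c w
      apply injW'
      rw [hf, Submodule.coe_smul, Submodule.coe_smul, QuadraticMap.map_smul,
        QuadraticMap.map_smul, hf]
    have fbij : Function.Bijective f := by
      constructor
      · intro w₁ w₂ h
        apply injW
        rw [← hf, ← hf, h]
      · intro w'
        have : q' (w' : V') ∈ Set.range ⇑q := hr ▸ ⟨(w' : V'), rfl⟩
        obtain ⟨x, hx⟩ := this
        obtain ⟨k, w, hk, hw, hkw⟩ := Submodule.codisjoint_iff_exists_add_eq.mp hW.codisjoint x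
        have hqw : q w = q' (w' : V') := by
          have : q x = q k + q w := by rw [← hkw, qadd]
          rw [← hx, this, hk, zero_add]
        refine ⟨⟨w, hw⟩, injW' _ _ ?_⟩
        rw [hf]; exact hqw
    let fL : W →ₗ[F] W' := { toFun := f, map_add' := fadd, map_smul' := fsmul }
    let fE : W ≃ₗ[F] W' := LinearEquiv.ofBijective fL fbij
    -- dims of kernels agree
    have hdK : Module.finrank F K = Module.finrank F K' := by
      have h1 := Submodule.finrank_add_eq_of_isCompl hW
      have h2 := Submodule.finrank_add_eq_of_isCompl hW'
      have h3 : Module.finrank F W = Module.finrank F W' := fE.finrank_eq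
      omega
    obtain ⟨gE⟩ := FiniteDimensional.nonempty_linearEquiv_of_finrank_eq hdK
    let e : V ≃ₗ[F] V' :=
      (Submodule.prodEquivOfIsCompl K W hW).symm.trans
        ((LinearEquiv.prodCongr gE fE).trans (Submodule.prodEquivOfIsCompl K' W' hW'))
    refine ⟨e, fun x => ?_⟩
    obtain ⟨⟨k, w⟩, rfl⟩ := (Submodule.prodEquivOfIsCompl K W hW).surjective x
    have hex : e ((Submodule.prodEquivOfIsCompl K W hW) (k, w)) = (gE k : V') + fE w := by
      simp [e, Submodule.coe_prodEquivOfIsCompl']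
    rw [hex]
    have h1 : (Submodule.prodEquivOfIsCompl K W hW) (k, w) = (k : V) + w := by
      simp [Submodule.coe_prodEquivOfIsCompl']
    rw [h1, q'add, qadd]
    have hgk : q' (gE k : V') = 0 := (gE k).2
    have hk0 : q ((k : V)) = 0 := k.2
    have hfw : q' (fE w : V') = q (w : V) := hf w
    rw [hgk, hk0, hfw]
end

section
/- Let F be a field of characteristic 2. Let q ≅ q_r ⊥ q_s and q' ≅ q'_r ⊥ q'_s be quadratic forms over F of the same total dimension, where q_r and q'_r are nonsingular quadratic forms and q_s and q'_s are totally singular quadratic forms, and set m = dim q_r. Then q ≅ q' if and only if q_s ≅ q'_s and q'_r ⊥ q_r ⊥ q_s ≅ (m × H) ⊥ q_s, where m × H denotes the orthogonal sum of m copies of the quadratic hyperbolic plane H. -/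
open QuadraticMap
set_option linter.unusedSectionVars false
set_option maxHeartbeats 800000


lemma ch2_add_self (F : Type*) {V : Type*} [Field F] [CharP F 2] [AddCommGroup V] [Module F V]
    (v : V) : v + v = 0 := by
  rw [← two_smul F v, (by exact CharTwo.two_eq_zero : (2:F) = 0), zero_smul]

section gadgets
variable {F V : Type*} [Field F] [CharP F 2] [AddCommGroup V] [Module F V]
  (Q : QuadraticForm F V)

lemma ch2_polar_self (x : V) : polar ⇑Q x x = 0 := by
  rw [polar_self, two_nsmul, CharTwo.add_self_eq_zero]

omit [CharP F 2] in
lemma qf_add (a b : V) : Q (a + b) = Q a + Q b + polar ⇑Q a b := by simp [polar]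

omit [CharP F 2] in
lemma qf_smul (c : F) (a : V) : Q (c • a) = c * c * Q a := by
  rw [QuadraticMap.map_smul, smul_eq_mul]

omit [CharP F 2] in
lemma isom_polar' {W : Type*} [AddCommGroup W] [Module F W] (Q' : QuadraticForm F W)
    (g : V → W) (hadd : ∀ a b, g (a + b) = g a + g b) (hg : ∀ y, Q' (g y) = Q y) (a b : V) :
    polar ⇑Q' (g a) (g b) = polar ⇑Q a b := by
  simp only [polar, ← hadd, hg]

/-- transvection as a linear map -/
noncomputable def tv (w : V) : V →ₗ[F] V where
  toFun y := y + ((Q w)⁻¹ * polar ⇑Q y w) • w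
  map_add' a b := by simp only [polar_add_left]; module
  map_smul' c a := by simp only [polar_smul_left, smul_eq_mul, RingHom.id_apply]; module

lemma tv_apply (w y : V) : tv Q w y = y + ((Q w)⁻¹ * polar ⇑Q y w) • w := rfl

lemma tv_invol (w : V) : Function.Involutive (tv Q w) := by
  intro y
  rw [tv_apply, tv_apply, polar_add_left, polar_smul_left, ch2_polar_self, smul_eq_mul, mul_zero,
    add_zero, add_assoc, ← two_smul F (((Q w)⁻¹ * polar ⇑Q y w) • w),
    (by exact CharTwo.two_eq_zero : (2:F) = 0), zero_smul, add_zero]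

/-- transvection as a linear equivalence -/
noncomputable def tvE (w : V) : V ≃ₗ[F] V := LinearEquiv.ofInvolutive (tv Q w) (tv_invol Q w)

lemma tvE_apply (w y : V) : tvE Q w y = y + ((Q w)⁻¹ * polar ⇑Q y w) • w := rfl

lemma tvE_isom (w : V) (hw : Q w ≠ 0) (y : V) : Q (tvE Q w y) = Q y := by
  rw [tvE_apply, qf_add, qf_smul, polar_smul_right]
  field_simp
  ring_nf
  rw [mul_right_comm (Q w), mul_inv_cancel₀ hw, one_mul]
  linear_combination (polar ⇑Q y w ^ 2) * (CharTwo.two_eq_zero : (2:F) = 0)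

/-- special Eichler transformation as a linear map -/
noncomputable def ei (d e : V) : V →ₗ[F] V where
  toFun y := y + polar ⇑Q y e • d + polar ⇑Q y d • e
  map_add' a b := by simp only [polar_add_left]; module
  map_smul' c a := by simp only [polar_smul_left, smul_eq_mul, RingHom.id_apply]; module

lemma ei_apply (d e y : V) : ei Q d e y = y + polar ⇑Q y e • d + polar ⇑Q y d • e := rfl

lemma ei_invol (d e : V) (hde : polar ⇑Q d e = 0) : Function.Involutive (ei Q d e) := by
  intro y
  rw [ei_apply, ei_apply]
  have h2 : ∀ (c : F) (v : V), c • v + c • v = (0:V) := fun c v => by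
    rw [← add_smul, CharTwo.add_self_eq_zero, zero_smul]
  simp only [polar_add_left, polar_smul_left, ch2_polar_self, polar_comm (⇑Q) e d, hde,
    smul_eq_mul, mul_zero, zero_mul, add_zero, zero_add]
  abel_nf
  simp only [two_smul, h2, add_zero, zero_add]

noncomputable def eiE (d e : V) (hde : polar ⇑Q d e = 0) : V ≃ₗ[F] V :=
  LinearEquiv.ofInvolutive (ei Q d e) (ei_invol Q d e hde)

lemma eiE_apply (d e : V) (hde : polar ⇑Q d e = 0) (y : V) :
    eiE Q d e hde y = y + polar ⇑Q y e • d + polar ⇑Q y d • e := rfl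

lemma eiE_isom (d e : V) (hd : Q d = 0) (he : Q e = 0) (hde : polar ⇑Q d e = 0) (y : V) :
    Q (eiE Q d e hde y) = Q y := by
  rw [eiE_apply, qf_add, qf_add, qf_smul, qf_smul]
  simp only [polar_add_left, polar_smul_left, polar_smul_right, hd, he, hde,
    polar_comm (⇑Q) e d, ch2_polar_self, smul_eq_mul, mul_zero, zero_mul, add_zero, zero_add]
  ring_nf
  rw [(by exact CharTwo.two_eq_zero : (2:F) = 0)]
  ring
end gadgets

section moves
variable {F V : Type*} [Field F] [CharP F 2] [AddCommGroup V] [Module F V]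
  (Q : QuadraticForm F V)

lemma move_adj (a b : V) (ha : Q a = 0) (hb : Q b = 0) (hab : polar ⇑Q a b ≠ 0) :
    ∃ g : V ≃ₗ[F] V, (∀ y, Q (g y) = Q y) ∧ g a = b := by
  have hw : Q (a + b) = polar ⇑Q a b := by rw [qf_add, ha, hb, zero_add, zero_add]
  refine ⟨tvE Q (a + b), fun y => tvE_isom Q _ (by rw [hw]; exact hab) y, ?_⟩
  rw [tvE_apply, hw, polar_add_right, ch2_polar_self, zero_add, inv_mul_cancel₀ hab, one_smul,
    ← add_assoc, ch2_add_self F, zero_add]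

lemma move_iso (u v e f : V) (hu : Q u = 0) (hv : Q v = 0) (huv : polar ⇑Q u v = 1)
    (he : Q e = 0) (hf : Q f = 0) (hef : polar ⇑Q e f = 1) :
    ∃ g : V ≃ₗ[F] V, (∀ y, Q (g y) = Q y) ∧ g u = e := by
  by_cases h1 : polar ⇑Q u e ≠ 0
  · exact move_adj Q u e hu he h1
  push_neg at h1
  by_cases h2 : polar ⇑Q u f ≠ 0
  · obtain ⟨g1, hg1, hg1u⟩ := move_adj Q u f hu hf h2
    obtain ⟨g2, hg2, hg2f⟩ := move_adj Q f e hf he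
      (by rw [polar_comm, hef]; exact one_ne_zero)
    exact ⟨g1.trans g2, fun y => by simp [LinearEquiv.trans_apply, hg2, hg1],
      by simp [LinearEquiv.trans_apply, hg1u, hg2f]⟩
  push_neg at h2
  -- now polar u e = 0 and polar u f = 0
  have huu : polar ⇑Q u u = 0 := ch2_polar_self Q u
  have hvu : polar ⇑Q v u = 1 := by rw [polar_comm, huv]
  obtain ⟨z, hz, hzu, hze⟩ : ∃ z : V, Q z = 0 ∧ polar ⇑Q u z = 1 ∧ polar ⇑Q z e ≠ 0 := by
    by_cases h3 : polar ⇑Q v e + 1 ≠ 0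
    · set s : F := (Q v + Q f + polar ⇑Q v f) / (polar ⇑Q v e + 1) with hs
      have htwo : (2:F) = 0 := CharTwo.two_eq_zero
      have hmul : s * (polar ⇑Q v e + 1) = Q v + Q f + polar ⇑Q v f :=
        div_mul_cancel₀ _ h3
      rw [hf, add_zero] at hmul
      refine ⟨v + f + s • e, ?_, ?_, ?_⟩
      · rw [qf_add, qf_add, qf_smul, he, hf, polar_add_left, polar_smul_right, polar_smul_right,
          polar_comm (⇑Q) f e, hef, smul_eq_mul, smul_eq_mul]
        linear_combination hmul + (Q v + polar ⇑Q v f) * htwo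
      · rw [polar_add_right, polar_add_right, polar_smul_right, huv, h2, h1, smul_zero, add_zero,
          add_zero]
      · rw [polar_add_left, polar_add_left, polar_smul_left, ch2_polar_self,
          polar_comm (⇑Q) f e, hef, smul_zero, add_zero]
        exact h3
    · push_neg at h3
      have hve : polar ⇑Q v e ≠ 0 := by
        intro h0; rw [h0, zero_add] at h3; exact one_ne_zero h3
      refine ⟨v + Q v • u, ?_, ?_, ?_⟩
      · rw [qf_add, qf_smul, hu, polar_smul_right, hvu, mul_zero, add_zero, smul_eq_mul, mul_one]
        exact CharTwo.add_self_eq_zero _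
      · rw [polar_add_right, polar_smul_right, huv, huu, smul_zero, add_zero]
      · rw [polar_add_left, polar_smul_left, h1, smul_zero, add_zero]
        exact hve
  obtain ⟨g1, hg1, hg1u⟩ := move_adj Q u z hu hz (by rw [hzu]; exact one_ne_zero)
  obtain ⟨g2, hg2, hg2z⟩ := move_adj Q z e hz he hze
  exact ⟨g1.trans g2, fun y => by simp [LinearEquiv.trans_apply, hg2, hg1],
    by simp [LinearEquiv.trans_apply, hg1u, hg2z]⟩

lemma fix_e (e v f : V) (he : Q e = 0) (hv : Q v = 0) (hf : Q f = 0)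
    (hev : polar ⇑Q e v = 1) (hef : polar ⇑Q e f = 1) :
    ∃ h : V ≃ₗ[F] V, (∀ y, Q (h y) = Q y) ∧ h e = e ∧ h v = f := by
  have hQd : Q (v + f) = polar ⇑Q v f := by rw [qf_add, hv, hf, zero_add, zero_add]
  have hed : polar ⇑Q e (v + f) = 0 := by
    rw [polar_add_right, hev, hef]; exact CharTwo.add_self_eq_zero _
  by_cases hvf : polar ⇑Q v f ≠ 0
  · have hd : Q (v + f) ≠ 0 := by rw [hQd]; exact hvf
    refine ⟨tvE Q (v + f), fun y => tvE_isom Q _ hd y, ?_, ?_⟩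
    · rw [tvE_apply, hed, mul_zero, zero_smul, add_zero]
    · rw [tvE_apply, hQd, polar_add_right, ch2_polar_self, zero_add, inv_mul_cancel₀ hvf,
        one_smul, ← add_assoc, ch2_add_self F, zero_add]
  · push_neg at hvf
    have hd0 : Q (v + f) = 0 := by rw [hQd, hvf]
    have hde : polar ⇑Q (v + f) e = 0 := by rw [polar_comm]; exact hed
    refine ⟨eiE Q (v + f) e hde, fun y => eiE_isom Q _ _ hd0 he hde y, ?_, ?_⟩
    · rw [eiE_apply, ch2_polar_self, polar_comm (⇑Q) e (v+f), hde, zero_smul, zero_smul,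
        add_zero, add_zero]
    · rw [eiE_apply, polar_comm (⇑Q) v e, hev,
        show polar ⇑Q v (v + f) = 0 by rw [polar_add_right, ch2_polar_self, hvf, add_zero],
        zero_smul, add_zero, one_smul, ← add_assoc, ch2_add_self F, zero_add]

lemma hyp_pair_trans (u v e f : V) (hu : Q u = 0) (hv : Q v = 0) (huv : polar ⇑Q u v = 1)
    (he : Q e = 0) (hf : Q f = 0) (hef : polar ⇑Q e f = 1) :
    ∃ g : V ≃ₗ[F] V, (∀ y, Q (g y) = Q y) ∧ g u = e ∧ g v = f := by
  obtain ⟨g1, hg1, hg1u⟩ := move_iso Q u v e f hu hv huv he hf hef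
  have hv1 : Q (g1 v) = 0 := by rw [hg1, hv]
  have hev1 : polar ⇑Q e (g1 v) = 1 := by
    rw [← hg1u]
    have := isom_polar' Q Q (⇑g1) (map_add g1) hg1 u v
    rw [this, huv]
  obtain ⟨g2, hg2, hg2e, hg2v⟩ := fix_e Q e (g1 v) f he hv1 hf hev1 hef
  exact ⟨g1.trans g2, fun y => by simp [LinearEquiv.trans_apply, hg2, hg1],
    by simp [LinearEquiv.trans_apply, hg1u, hg2e], by simp [LinearEquiv.trans_apply, hg2v]⟩
end moves



section cancel
variable {F : Type*} [Field F] [CharP F 2]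

variable (F) in
noncomputable def Hyp : QuadraticForm F (F × F) :=
  QuadraticMap.linMulLin (LinearMap.fst F F F) (LinearMap.snd F F F)

lemma Hyp_apply (x : F × F) : Hyp F x = x.1 * x.2 := by
  simp [Hyp, linMulLin_apply]

lemma polar_Hyp (a b : F × F) : polar ⇑(Hyp F) a b = a.1 * b.2 + a.2 * b.1 := by
  simp only [polar, Hyp_apply, Prod.fst_add, Prod.snd_add]
  ring

variable {W W' : Type*} [AddCommGroup W] [Module F W] [AddCommGroup W'] [Module F W']

lemma fst_eq_zero_of_polar (ψ : QuadraticForm F W) (z : (F × F) × W)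
    (h1 : polar ⇑((Hyp F).prod ψ) z ((1,0),0) = 0)
    (h2 : polar ⇑((Hyp F).prod ψ) z ((0,1),0) = 0) : z.1 = 0 := by
  rw [QuadraticMap.polar_prod] at h1 h2
  rw [polar_Hyp] at h1 h2
  simp only [polar_zero_right, mul_zero, mul_one, zero_mul, add_zero, zero_add] at h1 h2
  exact Prod.ext h2 h1

lemma hyp_cancel (ψ : QuadraticForm F W) (ψ' : QuadraticForm F W')
    (h : ((Hyp F).prod ψ).Equivalent ((Hyp F).prod ψ')) : ψ.Equivalent ψ' := by
  obtain ⟨φ⟩ := h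
  set Q : QuadraticForm F ((F × F) × W') := (Hyp F).prod ψ' with hQ
  have hval : ∀ x : (F × F) × W, Q (φ x) = ((Hyp F).prod ψ) x := fun x => φ.map_app x
  have hpol : ∀ a b, polar ⇑Q (φ a) (φ b) = polar ⇑((Hyp F).prod ψ) a b :=
    isom_polar' _ Q ⇑φ (fun a b => map_add φ a b) hval
  have he : Q ((1,0),0) = 0 := by simp [hQ, QuadraticMap.prod_apply, Hyp_apply]
  have hf : Q ((0,1),0) = 0 := by simp [hQ, QuadraticMap.prod_apply, Hyp_apply]
  have hef : polar ⇑Q ((1,0),0) ((0,1),0) = 1 := by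
    rw [hQ, QuadraticMap.polar_prod, polar_Hyp]; simp
  have hu : Q (φ ((1,0),0)) = 0 := by
    rw [hval]; simp [QuadraticMap.prod_apply, Hyp_apply]
  have hv : Q (φ ((0,1),0)) = 0 := by
    rw [hval]; simp [QuadraticMap.prod_apply, Hyp_apply]
  have huv : polar ⇑Q (φ ((1,0),0)) (φ ((0,1),0)) = 1 := by
    rw [hpol, QuadraticMap.polar_prod, polar_Hyp]; simp
  obtain ⟨g, hg, hge, hgf⟩ := hyp_pair_trans Q _ _ _ _ hu hv huv he hf hef
  set k : ((F × F) × W) ≃ₗ[F] ((F × F) × W') := φ.toLinearEquiv ≪≫ₗ g with hk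
  have hkval : ∀ x, Q (k x) = ((Hyp F).prod ψ) x := fun x => by
    rw [hk]; simp only [LinearEquiv.trans_apply]; rw [hg]; exact hval x
  have hkpol : ∀ a b, polar ⇑Q (k a) (k b) = polar ⇑((Hyp F).prod ψ) a b :=
    isom_polar' _ Q ⇑k (fun a b => map_add k a b) hkval
  have hke : k ((1,0),0) = ((1,0),0) := by
    rw [hk]; simp only [LinearEquiv.trans_apply]; exact hge
  have hkf : k ((0,1),0) = ((0,1),0) := by
    rw [hk]; simp only [LinearEquiv.trans_apply]; exact hgf
  -- first components vanish
  have hfst : ∀ w : W, (k (0, w)).1 = 0 := by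
    intro w
    refine fst_eq_zero_of_polar ψ' _ ?_ ?_
    · rw [← hke, hkpol, QuadraticMap.polar_prod, polar_Hyp]; simp
    · rw [← hkf, hkpol, QuadraticMap.polar_prod, polar_Hyp]; simp
  have hfst' : ∀ w' : W', (k.symm (0, w')).1 = 0 := by
    intro w'
    have h1 : polar ⇑((Hyp F).prod ψ) (k.symm (0, w')) ((1,0),0) = 0 := by
      rw [← hkpol, k.apply_symm_apply, hke, QuadraticMap.polar_prod, polar_Hyp]; simp
    have h2 : polar ⇑((Hyp F).prod ψ) (k.symm (0, w')) ((0,1),0) = 0 := by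
      rw [← hkpol, k.apply_symm_apply, hkf, QuadraticMap.polar_prod, polar_Hyp]; simp
    exact fst_eq_zero_of_polar ψ _ h1 h2
  have hksnd : ∀ w : W, k (0, w) = (0, (k (0, w)).2) := fun w => Prod.ext (hfst w) rfl
  have hksnd' : ∀ w' : W', k.symm (0, w') = (0, (k.symm (0, w')).2) := fun w' =>
    Prod.ext (hfst' w') rfl
  refine ⟨⟨LinearEquiv.ofLinear
    ((LinearMap.snd F (F × F) W') ∘ₗ (k : ((F × F) × W) →ₗ[F] ((F × F) × W')) ∘ₗ
      (LinearMap.inr F (F × F) W))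
    ((LinearMap.snd F (F × F) W) ∘ₗ (k.symm : ((F × F) × W') →ₗ[F] ((F × F) × W)) ∘ₗ
      (LinearMap.inr F (F × F) W')) ?_ ?_, ?_⟩⟩
  · apply LinearMap.ext; intro w'
    show (k ((0:F × F), (k.symm ((0:F × F), w')).2)).2 = w'
    rw [← hksnd' w', k.apply_symm_apply]
  · apply LinearMap.ext; intro w
    show (k.symm ((0:F × F), (k ((0:F × F), w)).2)).2 = w
    rw [← hksnd w, k.symm_apply_apply]
  · intro w
    show ψ' ((k ((0:F × F), w)).2) = ψ w
    have := hkval (0, w)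
    rw [hksnd w] at this
    simp only [hQ, QuadraticMap.prod_apply, Hyp_apply] at this
    simpa using this
end cancel


section pimach
variable {F : Type*} [Field F]

/-- assoc equivalence of quadratic forms -/
noncomputable def equivAssoc {M₁ M₂ M₃ : Type*} [AddCommGroup M₁] [Module F M₁]
    [AddCommGroup M₂] [Module F M₂] [AddCommGroup M₃] [Module F M₃]
    (Q₁ : QuadraticForm F M₁) (Q₂ : QuadraticForm F M₂) (Q₃ : QuadraticForm F M₃) :
    ((Q₁.prod Q₂).prod Q₃).IsometryEquiv (Q₁.prod (Q₂.prod Q₃)) :=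
  { LinearEquiv.prodAssoc F M₁ M₂ M₃ with
    map_app' := fun x => by
      simp [QuadraticMap.prod_apply, LinearEquiv.prodAssoc_apply, add_assoc] }

/-- commutativity as Equivalent -/
lemma equivComm {M₁ M₂ : Type*} [AddCommGroup M₁] [Module F M₁]
    [AddCommGroup M₂] [Module F M₂]
    (Q₁ : QuadraticForm F M₁) (Q₂ : QuadraticForm F M₂) :
    (Q₁.prod Q₂).Equivalent (Q₂.prod Q₁) :=
  ⟨QuadraticMap.IsometryEquiv.prodComm Q₁ Q₂⟩

/-- splitting off the first coordinate of a `Fin (m+1)`-indexed pi type -/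
def piSplit (m : ℕ) (M : Type*) [AddCommGroup M] [Module F M] :
    (Fin (m + 1) → M) ≃ₗ[F] M × (Fin m → M) where
  toFun f := (f 0, fun i => f i.succ)
  map_add' _ _ := rfl
  map_smul' _ _ := rfl
  invFun p := Fin.cons p.1 p.2
  left_inv f := by
    funext i
    refine Fin.cases ?_ (fun j => ?_) i
    · simp
    · simp
  right_inv p := by
    refine Prod.ext ?_ ?_
    · simp
    · funext j; simp

noncomputable def equivPiSucc {M : Type*} [AddCommGroup M] [Module F M]
    (P : QuadraticForm F M) (m : ℕ) :
    (QuadraticMap.pi fun _ : Fin (m + 1) => P).IsometryEquiv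
      (P.prod (QuadraticMap.pi fun _ : Fin m => P)) :=
  { piSplit m M with
    map_app' := fun f => by
      simp only [QuadraticMap.prod_apply, QuadraticMap.pi_apply]
      rw [Fin.sum_univ_succ]
      rfl }

/-- dropping an empty pi factor -/
noncomputable def equivPiZero {M W : Type*} [AddCommGroup M] [Module F M]
    [AddCommGroup W] [Module F W]
    (P : QuadraticForm F M) (ψ : QuadraticForm F W) :
    ((QuadraticMap.pi fun _ : Fin 0 => P).prod ψ).IsometryEquiv ψ where
  toFun p := p.2
  map_add' _ _ := rfl
  map_smul' _ _ := rfl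
  invFun w := (fun i => i.elim0, w)
  left_inv p := by
    refine Prod.ext ?_ rfl
    exact funext fun i => i.elim0
  right_inv w := rfl
  map_app' p := by
    simp [QuadraticMap.prod_apply, QuadraticMap.pi_apply]

lemma step_pi_succ {X : Type*} [AddCommGroup X] [Module F X] (n : ℕ)
    (P : QuadraticForm F (F × F)) (χ : QuadraticForm F X) :
    (((QuadraticMap.pi fun _ : Fin (n+1) => P)).prod χ).Equivalent
      (P.prod ((QuadraticMap.pi fun _ : Fin n => P).prod χ)) :=
  (Equivalent.prod ⟨equivPiSucc P n⟩ (Equivalent.refl χ)).trans ⟨equivAssoc _ _ _⟩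

variable [CharP F 2]
variable {W W' : Type*} [AddCommGroup W] [Module F W] [AddCommGroup W'] [Module F W']

lemma pi_hyp_cancel (m : ℕ) (ψ : QuadraticForm F W) (ψ' : QuadraticForm F W')
    (h : ((QuadraticMap.pi fun _ : Fin m => Hyp F).prod ψ).Equivalent
      ((QuadraticMap.pi fun _ : Fin m => Hyp F).prod ψ')) : ψ.Equivalent ψ' := by
  induction m with
  | zero =>
    exact ⟨((equivPiZero (Hyp F) ψ).symm.trans (Classical.choice h)).trans (equivPiZero _ ψ')⟩
  | succ n ih =>
    apply ih
    apply hyp_cancel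
    exact ((step_pi_succ n (Hyp F) ψ).symm.trans h).trans (step_pi_succ n (Hyp F) ψ')
end pimach


section double
variable {F V : Type*} [Field F] [CharP F 2] [AddCommGroup V] [Module F V]
  [FiniteDimensional F V]

/-- the pairing form on `(Fin n → F) × (Fin n → F)` -/
def prodPi (n : ℕ) : ((Fin n → F) × (Fin n → F)) ≃ₗ[F] (Fin n → F × F) where
  toFun p i := (p.1 i, p.2 i)
  map_add' _ _ := rfl
  map_smul' _ _ := rfl
  invFun g := (fun i => (g i).1, fun i => (g i).2)
  left_inv p := rfl
  right_inv g := rfl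

lemma double_hyperbolic (q : QuadraticForm F V)
    (hq : LinearMap.BilinForm.Nondegenerate (QuadraticMap.polarBilin q)) :
    (q.prod q).Equivalent
      (QuadraticMap.pi fun _ : Fin (Module.finrank F V) => Hyp F) := by
  classical
  set n := Module.finrank F V
  set c : Module.Basis (Fin n) F V := Module.finBasis F V with hc
  set B : LinearMap.BilinMap F V F := q.toBilin c with hB
  have hBq : ∀ u, B u u = q u := fun u => by
    have := QuadraticMap.toQuadraticMap_toBilin q c
    calc B u u = (LinearMap.BilinMap.toQuadraticMap B) u := rfl
    _ = q u := by rw [hB, this]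
  set D : V ≃ₗ[F] Module.Dual F V := LinearMap.BilinForm.toDual (QuadraticMap.polarBilin q) hq with hD
  have hDval : ∀ y z, D y z = polar ⇑q y z := fun y z => by
    rw [hD, LinearMap.BilinForm.toDual_def]; simp [polarBilin]
  -- L1 : (x,y) ↦ (x+y, y)
  set L1 : (V × V) ≃ₗ[F] (V × V) :=
    { toFun := fun p => (p.1 + p.2, p.2)
      map_add' := fun a b => by ext <;> simp <;> abel
      map_smul' := fun t a => by ext <;> simp [smul_add]
      invFun := fun p => (p.1 + p.2, p.2)
      left_inv := fun p => by
        ext <;> simp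
        rw [add_assoc, ch2_add_self F, add_zero]
      right_inv := fun p => by
        ext <;> simp
        rw [add_assoc, ch2_add_self F, add_zero] } with hL1
  -- L2 : (u,v) ↦ (u, D v + B u)
  set L2 : (V × V) ≃ₗ[F] (V × Module.Dual F V) :=
    { toFun := fun p => (p.1, D p.2 + B p.1)
      map_add' := fun a b => by ext <;> simp [map_add] <;> abel
      map_smul' := fun t a => by ext <;> simp [_root_.map_smul, smul_add]
      invFun := fun p => (p.1, D.symm (p.2 + B p.1))
      left_inv := fun p => by
        ext
        · rfl
        · simp only
          rw [add_assoc, ch2_add_self F, add_zero, D.symm_apply_apply]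
      right_inv := fun p => by
        ext
        · rfl
        · simp only
          rw [D.apply_symm_apply, add_assoc, ch2_add_self F, add_zero] } with hL2
  -- L3
  set L3 : (V × Module.Dual F V) ≃ₗ[F] (Fin n → F × F) :=
    (c.equivFun.prodCongr c.dualBasis.equivFun) ≪≫ₗ prodPi n with hL3
  have hL3val : ∀ (u : V) (ψ : Module.Dual F V),
      (QuadraticMap.pi fun _ : Fin n => Hyp F) (L3 (u, ψ)) = ψ u := by
    intro u ψ
    rw [hL3]
    simp only [LinearEquiv.trans_apply, LinearEquiv.prodCongr_apply, QuadraticMap.pi_apply]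
    have : ∀ i, Hyp F ((prodPi n (c.equivFun u, c.dualBasis.equivFun ψ)) i)
        = c.repr u i * ψ (c i) := by
      intro i
      rw [Hyp_apply]
      simp [prodPi, Module.Basis.equivFun_apply, Module.Basis.dualBasis_repr]
    rw [Finset.sum_congr rfl fun i _ => this i]
    calc ∑ i, c.repr u i * ψ (c i) = ∑ i, ψ (c.repr u i • c i) := by
          simp [_root_.map_smul, smul_eq_mul]
    _ = ψ (∑ i, c.repr u i • c i) := by rw [← map_sum]
    _ = ψ u := by rw [c.sum_repr u]
  refine ⟨⟨L1 ≪≫ₗ L2 ≪≫ₗ L3, fun p => ?_⟩⟩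
  show (QuadraticMap.pi fun _ : Fin n => Hyp F) (L3 (L2 (L1 p))) = (q.prod q) p
  rw [hL1, hL2]
  simp only [LinearEquiv.coe_mk, Equiv.coe_fn_mk, LinearMap.coe_mk, AddHom.coe_mk]
  rw [hL3val]
  simp only [LinearMap.add_apply]
  rw [hDval, hBq, QuadraticMap.prod_apply, qf_add, polar_add_right, ch2_polar_self,
    polar_comm (⇑q) p.2 p.1]
  ring_nf
  rw [(by exact CharTwo.two_eq_zero : (2:F) = 0)]
  ring
end double


section singular
variable {F Vr Vs Vr' Vs' : Type*} [Field F]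
    [AddCommGroup Vr] [Module F Vr] [AddCommGroup Vs] [Module F Vs]
    [AddCommGroup Vr'] [Module F Vr'] [AddCommGroup Vs'] [Module F Vs']

lemma singular_part (qr : QuadraticForm F Vr) (qs : QuadraticForm F Vs)
    (qr' : QuadraticForm F Vr') (qs' : QuadraticForm F Vs')
    (hqr : LinearMap.BilinForm.Nondegenerate (QuadraticMap.polarBilin qr))
    (hqr' : LinearMap.BilinForm.Nondegenerate (QuadraticMap.polarBilin qr'))
    (hqs : ∀ x y : Vs, QuadraticMap.polar (⇑qs) x y = 0)
    (hqs' : ∀ x y : Vs', QuadraticMap.polar (⇑qs') x y = 0)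
    (E : (qr.prod qs).IsometryEquiv (qr'.prod qs')) : qs.Equivalent qs' := by
  set k : (Vr × Vs) ≃ₗ[F] (Vr' × Vs') := E.toLinearEquiv with hk
  have hkval : ∀ x, (qr'.prod qs') (k x) = (qr.prod qs) x := fun x => E.map_app x
  have hkpol : ∀ a b, polar ⇑(qr'.prod qs') (k a) (k b) = polar ⇑(qr.prod qs) a b :=
    isom_polar' _ _ ⇑k (fun a b => map_add k a b) hkval
  have hfst : ∀ s : Vs, (k (0, s)).1 = 0 := by
    intro s
    apply hqr'.1
    intro x'
    have h := hkpol (0, s) (k.symm (x', 0))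
    rw [k.apply_symm_apply] at h
    simp only [QuadraticMap.polar_prod, polar_zero_left, polar_zero_right, hqs,
      add_zero, zero_add] at h
    rw [QuadraticMap.polarBilin_apply_apply]
    exact h
  have hfst' : ∀ s' : Vs', (k.symm (0, s')).1 = 0 := by
    intro s'
    apply hqr.1
    intro x
    have h := hkpol (k.symm (0, s')) (x, 0)
    rw [k.apply_symm_apply] at h
    simp only [QuadraticMap.polar_prod, polar_zero_left, polar_zero_right, hqs',
      add_zero, zero_add] at h
    rw [QuadraticMap.polarBilin_apply_apply]
    exact h.symm
  have hksnd : ∀ s : Vs, k (0, s) = (0, (k (0, s)).2) := fun s => Prod.ext (hfst s) rfl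
  have hksnd' : ∀ s' : Vs', k.symm (0, s') = (0, (k.symm (0, s')).2) := fun s' =>
    Prod.ext (hfst' s') rfl
  refine ⟨⟨LinearEquiv.ofLinear
    ((LinearMap.snd F Vr' Vs') ∘ₗ (k : (Vr × Vs) →ₗ[F] (Vr' × Vs')) ∘ₗ
      (LinearMap.inr F Vr Vs))
    ((LinearMap.snd F Vr Vs) ∘ₗ (k.symm : (Vr' × Vs') →ₗ[F] (Vr × Vs)) ∘ₗ
      (LinearMap.inr F Vr' Vs')) ?_ ?_, ?_⟩⟩
  · apply LinearMap.ext; intro s'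
    show (k ((0:Vr), (k.symm ((0:Vr'), s')).2)).2 = s'
    rw [← hksnd' s', k.apply_symm_apply]
  · apply LinearMap.ext; intro s
    show (k.symm ((0:Vr'), (k ((0:Vr), s)).2)).2 = s
    rw [← hksnd s, k.symm_apply_apply]
  · intro s
    show qs' ((k ((0:Vr), s)).2) = qs s
    have := hkval (0, s)
    rw [hksnd s] at this
    simp only [QuadraticMap.prod_apply, QuadraticMap.map_zero, zero_add] at this
    simpa using this
end singular

section swap3
variable {F A B C : Type*} [Field F] [AddCommGroup A] [Module F A]
  [AddCommGroup B] [Module F B] [AddCommGroup C] [Module F C]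

lemma swap12 (QA : QuadraticForm F A) (QB : QuadraticForm F B) (QC : QuadraticForm F C) :
    (QA.prod (QB.prod QC)).Equivalent (QB.prod (QA.prod QC)) :=
  QuadraticMap.Equivalent.trans
    (QuadraticMap.Equivalent.symm (⟨equivAssoc QA QB QC⟩ : ((QA.prod QB).prod QC).Equivalent
      (QA.prod (QB.prod QC))))
    ((QuadraticMap.Equivalent.prod (equivComm QA QB) (QuadraticMap.Equivalent.refl QC)).trans
      ⟨equivAssoc QB QA QC⟩)
end swap3

lemma pi_hyp_cast {F : Type*} [Field F] (a b : ℕ) (h : a = b) :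
    (QuadraticMap.pi fun _ : Fin a => Hyp F).Equivalent
      (QuadraticMap.pi fun _ : Fin b => Hyp F) := by
  subst h; exact QuadraticMap.Equivalent.refl _

/-- characterization of isometry of quadratic forms `q ≅ q_r ⊥ q_s` in
characteristic 2 in terms of the totally singular parts and Witt-type data. -/
theorem stmt_1 {F : Type*} [Field F] [CharP F 2]
    {Vr Vs Vr' Vs' : Type*}
    [AddCommGroup Vr] [Module F Vr] [FiniteDimensional F Vr]
    [AddCommGroup Vs] [Module F Vs] [FiniteDimensional F Vs]
    [AddCommGroup Vr'] [Module F Vr'] [FiniteDimensional F Vr']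
    [AddCommGroup Vs'] [Module F Vs'] [FiniteDimensional F Vs']
    (qr : QuadraticForm F Vr) (qs : QuadraticForm F Vs)
    (qr' : QuadraticForm F Vr') (qs' : QuadraticForm F Vs')
    -- `q_r` and `q'_r` are nonsingular: their polar forms are nondegenerate
    (hqr : LinearMap.BilinForm.Nondegenerate (QuadraticMap.polarBilin qr))
    (hqr' : LinearMap.BilinForm.Nondegenerate (QuadraticMap.polarBilin qr'))
    -- `q_s` and `q'_s` are totally singular: their polar forms vanish
    (hqs : ∀ x y : Vs, QuadraticMap.polar (⇑qs) x y = 0)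
    (hqs' : ∀ x y : Vs', QuadraticMap.polar (⇑qs') x y = 0)
    -- the two forms have the same total dimension
    (hdim : Module.finrank F (Vr × Vs) = Module.finrank F (Vr' × Vs'))
    -- the quadratic hyperbolic plane `H : (x, y) ↦ x * y` on `F²`
    (H : QuadraticForm F (F × F))
    (hH : H = QuadraticMap.linMulLin (LinearMap.fst F F F) (LinearMap.snd F F F)) :
    (∃ e : (Vr × Vs) ≃ₗ[F] (Vr' × Vs'), ∀ x, (qr'.prod qs') (e x) = (qr.prod qs) x) ↔
      ((∃ e : Vs ≃ₗ[F] Vs', ∀ x, qs' (e x) = qs x) ∧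
        (∃ e : (Vr' × Vr × Vs) ≃ₗ[F]
            ((Fin (Module.finrank F Vr) → F × F) × Vs),
          ∀ x, ((QuadraticMap.pi fun _ : Fin (Module.finrank F Vr) => H).prod qs) (e x) =
            (qr'.prod (qr.prod qs)) x)) := by
  have hH2 : H = Hyp F := hH
  subst hH2
  constructor
  · rintro ⟨e, he⟩
    have E : (qr.prod qs).IsometryEquiv (qr'.prod qs') := ⟨e, he⟩
    have hqsE : qs.Equivalent qs' := singular_part qr qs qr' qs' hqr hqr' hqs hqs' E
    have hr : Module.finrank F Vr' = Module.finrank F Vr := by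
      obtain ⟨f⟩ := hqsE
      have hs : Module.finrank F Vs = Module.finrank F Vs' := f.toLinearEquiv.finrank_eq
      rw [Module.finrank_prod, Module.finrank_prod] at hdim
      omega
    have key : (qr'.prod (qr.prod qs)).Equivalent
        ((QuadraticMap.pi fun _ : Fin (Module.finrank F Vr) => Hyp F).prod qs) := by
      refine ((QuadraticMap.Equivalent.prod (QuadraticMap.Equivalent.refl qr')
        (⟨E⟩ : (qr.prod qs).Equivalent (qr'.prod qs'))).trans ?_)
      refine (QuadraticMap.Equivalent.symm (⟨equivAssoc qr' qr' qs'⟩ :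
        ((qr'.prod qr').prod qs').Equivalent (qr'.prod (qr'.prod qs')))).trans ?_
      refine (QuadraticMap.Equivalent.prod (double_hyperbolic qr' hqr')
        (QuadraticMap.Equivalent.refl qs')).trans ?_
      exact QuadraticMap.Equivalent.prod
        (pi_hyp_cast (Module.finrank F Vr') (Module.finrank F Vr) hr) hqsE.symm
    obtain ⟨f⟩ := hqsE
    obtain ⟨E2⟩ := key
    exact ⟨⟨f.toLinearEquiv, fun x => f.map_app x⟩, ⟨E2.toLinearEquiv, fun x => E2.map_app x⟩⟩
  · rintro ⟨⟨f, hf⟩, ⟨e2, he2⟩⟩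
    have hfE : qs.Equivalent qs' := ⟨⟨f, hf⟩⟩
    have E2 : (qr'.prod (qr.prod qs)).Equivalent
        ((QuadraticMap.pi fun _ : Fin (Module.finrank F Vr) => Hyp F).prod qs) := ⟨⟨e2, he2⟩⟩
    set mH := QuadraticMap.pi fun _ : Fin (Module.finrank F Vr) => Hyp F with hmH
    have chain : (mH.prod (qr'.prod qs)).Equivalent (mH.prod (qr.prod qs)) := by
      refine (QuadraticMap.Equivalent.prod (double_hyperbolic qr hqr).symm
        (QuadraticMap.Equivalent.refl (qr'.prod qs))).trans ?_
      refine QuadraticMap.Equivalent.trans (⟨equivAssoc qr qr (qr'.prod qs)⟩ :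
        ((qr.prod qr).prod (qr'.prod qs)).Equivalent
          (qr.prod (qr.prod (qr'.prod qs)))) ?_
      refine (QuadraticMap.Equivalent.prod (QuadraticMap.Equivalent.refl qr)
        (swap12 qr qr' qs)).trans ?_
      refine (QuadraticMap.Equivalent.prod (QuadraticMap.Equivalent.refl qr) E2).trans ?_
      exact swap12 qr mH qs
    have hcanc : (qr'.prod qs).Equivalent (qr.prod qs) :=
      pi_hyp_cancel (Module.finrank F Vr) (qr'.prod qs) (qr.prod qs) chain
    have final : (qr.prod qs).Equivalent (qr'.prod qs') :=
      (hcanc.symm).trans (QuadraticMap.Equivalent.prod (QuadraticMap.Equivalent.refl qr') hfE)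
    obtain ⟨Ef⟩ := final
    exact ⟨Ef.toLinearEquiv, fun x => Ef.map_app x⟩
end

section
/- Let F be a field of characteristic 2, let q be a totally singular quadratic form over F on a finite-dimensional F-vector space V which is not a zero form (i.e. q(x) ≠ 0 for some x), let L/F be a finite separable field extension, and let a ∈ F. If there exists a nonzero vector z in L ⊗_F V with q_L(z) = a, then there exists a nonzero vector y ∈ V with q(y) = a. -/
open scoped TensorProduct

/-- `Q` is the scalar extension of the quadratic form `q` to `L`: it satisfies
`Q (c ⊗ x) = c² ⬝ q x` and its polar form is the base change of the polar form of `q`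
(a bilinear form is determined by its values on pure tensors). -/
def IsScalarExt (F : Type*) {L : Type*} [Field F] [Field L] [Algebra F L]
    {V : Type*} [AddCommGroup V] [Module F V]
    (q : QuadraticForm F V) (Q : QuadraticForm L (L ⊗[F] V)) : Prop :=
  (∀ (c : L) (x : V), Q (c ⊗ₜ[F] x) = c ^ 2 * algebraMap F L (q x)) ∧
  ∀ (c d : L) (x y : V),
    QuadraticMap.polar (⇑Q) (c ⊗ₜ[F] x) (d ⊗ₜ[F] y) =
      c * d * algebraMap F L (QuadraticMap.polar (⇑q) x y)

section Aux

variable {F L : Type*} [Field F] [CharP F 2] [Field L] [Algebra F L]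

/-- an element `x` of a separable extension lies in `F⟮x²⟯`. -/
theorem aux_mem_adjoin_sq [FiniteDimensional F L] [Algebra.IsSeparable F L] (x : L) :
    x ∈ Algebra.adjoin F ({x ^ 2} : Set L) := by
  haveI : CharP L 2 := charP_of_injective_algebraMap (algebraMap F L).injective 2
  set K := IntermediateField.adjoin F ({x ^ 2} : Set L) with hK
  haveI : Algebra.IsSeparable K L := Algebra.isSeparable_tower_top_of_isSeparable F K L
  haveI : CharP K 2 := charP_of_injective_algebraMap (algebraMap F K).injective 2
  have hint : IsIntegral K x := (Algebra.IsSeparable.isIntegral K x)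
  have hx2 : x ^ 2 ∈ K := IntermediateField.subset_adjoin F _ rfl
  set p : Polynomial K := Polynomial.X ^ 2 - Polynomial.C ⟨x ^ 2, hx2⟩ with hp
  have hroot : Polynomial.aeval x p = 0 := by
    simp [hp]
  have hdvd : minpoly K x ∣ p := minpoly.dvd K x hroot
  have hpmonic : p.Monic := by
    apply Polynomial.monic_X_pow_sub_C _ (by norm_num)
  have hpdeg : p.natDegree = 2 := by
    rw [hp]
    compute_degree!
  have hdeg : (minpoly K x).natDegree ≤ 2 := by
    rw [← hpdeg]
    exact Polynomial.natDegree_le_of_dvd hdvd hpmonic.ne_zero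
  have hsep : (minpoly K x).Separable := Algebra.IsSeparable.isSeparable K x
  have hirr : Irreducible (minpoly K x) := minpoly.irreducible hint
  have hdpos : 0 < (minpoly K x).natDegree := minpoly.natDegree_pos hint
  have hne2 : (minpoly K x).natDegree ≠ 2 := by
    intro h2
    have heq : minpoly K x = p := by
      have := Polynomial.eq_of_monic_of_dvd_of_natDegree_le (minpoly.monic hint) hpmonic hdvd
        (by omega)
      exact this.symm
    have hder : Polynomial.derivative p = 0 := by
      rw [hp]
      simp [Polynomial.derivative_X_pow]
      exact CharTwo.add_self_eq_zero (1 : Polynomial K)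
    rw [Polynomial.separable_iff_derivative_ne_zero hirr, heq, hder] at hsep
    exact hsep rfl
  have h1 : (minpoly K x).natDegree = 1 := by omega
  have hmem : x ∈ (algebraMap K L).range := by
    rw [← minpoly.degree_eq_one_iff]
    rw [Polynomial.degree_eq_natDegree (minpoly.ne_zero hint), h1]
    rfl
  obtain ⟨k, hk⟩ := hmem
  have : x ∈ K := hk ▸ k.2
  have hKsub : K.toSubalgebra = Algebra.adjoin F ({x ^ 2} : Set L) := by
    exact IntermediateField.adjoin_simple_toSubalgebra_of_isAlgebraic
      (Algebra.IsAlgebraic.isAlgebraic _)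
  rw [← hKsub]
  exact this

end Aux

section Aux2

variable {F L : Type*} [Field F] [CharP F 2] [Field L] [Algebra F L]
variable [FiniteDimensional F L] [Algebra.IsSeparable F L]

theorem aux_span_sq :
    Submodule.span F {y : L | ∃ x : L, y = x ^ 2} = ⊤ := by
  rw [eq_top_iff]
  intro x _
  have h1 := aux_mem_adjoin_sq (F := F) x
  rw [Algebra.adjoin_singleton_eq_range_aeval] at h1
  obtain ⟨P, hP⟩ := h1
  have hP' : Polynomial.aeval (x ^ 2) P = x := hP
  rw [Polynomial.aeval_eq_sum_range] at hP'
  rw [← hP']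
  refine Submodule.sum_mem _ fun i _ => Submodule.smul_mem _ _ (Submodule.subset_span ?_)
  exact ⟨x ^ i, by rw [← pow_mul, ← pow_mul, mul_comm i 2]⟩

theorem aux_nice_basis :
    ∃ (t : Set L) (_ : Fintype ↥t) (_ : Nonempty ↥t) (d : ↥t → L),
      LinearIndependent F d ∧ Submodule.span F (Set.range d) = ⊤ ∧
      LinearIndependent F (fun k : ↥t => (d k) ^ 2) := by
  haveI : CharP L 2 := charP_of_injective_algebraMap (algebraMap F L).injective 2
  obtain ⟨t, hts, hsp, hli⟩ := exists_linearIndependent F {y : L | ∃ x : L, y = x ^ 2}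
  rw [aux_span_sq] at hsp
  haveI : Fintype t := (hli.setFinite).fintype
  have hB : Module.Basis t F L := Module.Basis.mk hli (by rw [Subtype.range_coe, hsp])
  have hsq : ∀ e : t, ∃ x : L, (e : L) = x ^ 2 := fun e => hts e.2
  choose d0 hd0 using hsq
  have hli0 : LinearIndependent F d0 := by
    rw [linearIndependent_iff']
    intro s g hg i hi
    have h2 : (∑ j ∈ s, g j • d0 j) ^ 2 = 0 := by rw [hg]; exact zero_pow (by norm_num)
    rw [CharTwo.sum_sq] at h2
    have h3 : ∑ j ∈ s, (g j ^ 2) • ((j : L)) = 0 := by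
      rw [← h2]
      refine Finset.sum_congr rfl fun j _ => ?_
      rw [smul_pow, ← hd0]
    have h4 := linearIndependent_iff'.mp hli s (fun j => g j ^ 2) h3 i hi
    exact pow_eq_zero_iff (n := 2) (by norm_num) |>.mp h4
  have hcard : Fintype.card t = Module.finrank F L := (Module.finrank_eq_card_basis hB).symm
  haveI : Nonempty t := by
    rw [← Fintype.card_pos_iff, hcard]
    exact Module.finrank_pos
  have hd := coe_basisOfLinearIndependentOfCardEqFinrank hli0 hcard
  refine ⟨t, inferInstance, inferInstance, d0, hli0, ?_, ?_⟩
  · rw [← hd]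
    exact (basisOfLinearIndependentOfCardEqFinrank hli0 hcard).span_eq
  · simp only [← hd0]
    exact hli

end Aux2

section Aux3

variable {F L : Type*} [Field F] [CharP F 2] [Field L] [Algebra F L]
variable [FiniteDimensional F L] [Algebra.IsSeparable F L]

theorem aux_descend {n : ℕ} (w : Fin n → F) (c : Fin n → L) (i₀ : Fin n) (hc : c i₀ ≠ 0)
    (hrel : ∑ i, (c i) ^ 2 * algebraMap F L (w i) = 0) :
    ∃ f : Fin n → F, f i₀ ≠ 0 ∧ ∑ i, (f i) ^ 2 * w i = 0 := by
  haveI : CharP L 2 := charP_of_injective_algebraMap (algebraMap F L).injective 2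
  obtain ⟨t, ht1, ht2, d, hli, hsp, hli2⟩ := aux_nice_basis (F := F) (L := L)
  let B : Module.Basis t F L := Module.Basis.mk hli (by rw [hsp])
  have hBd : ∀ k, B k = d k := fun k => by simp [B, Module.Basis.mk_apply]
  set g : Fin n → t → F := fun i k => B.repr (c i) k with hg
  have hci : ∀ i, c i = ∑ k, g i k • d k := by
    intro i
    conv_lhs => rw [← B.sum_repr (c i)]
    exact Finset.sum_congr rfl fun k _ => by rw [hBd]
  have e1 : ∀ i, (c i) ^ 2 * algebraMap F L (w i)
      = ∑ k : t, ((g i k) ^ 2 * w i) • (d k ^ 2) := by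
    intro i
    rw [hci i, CharTwo.sum_sq, Finset.sum_mul]
    refine Finset.sum_congr rfl fun k _ => ?_
    rw [smul_pow, Algebra.smul_def, Algebra.smul_def, map_pow, map_mul, map_pow]
    ring
  have h1 : ∑ k : t, (∑ i, (g i k) ^ 2 * w i) • (d k ^ 2) = 0 := by
    calc ∑ k : t, (∑ i, (g i k) ^ 2 * w i) • (d k ^ 2)
        = ∑ k : t, ∑ i, ((g i k) ^ 2 * w i) • (d k ^ 2) := by
          refine Finset.sum_congr rfl fun k _ => ?_
          rw [Finset.sum_smul]
      _ = ∑ i, ∑ k : t, ((g i k) ^ 2 * w i) • (d k ^ 2) := Finset.sum_comm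
      _ = ∑ i, (c i) ^ 2 * algebraMap F L (w i) :=
          Finset.sum_congr rfl fun i _ => (e1 i).symm
      _ = 0 := hrel
  have key : ∀ k : t, ∑ i, (g i k) ^ 2 * w i = 0 :=
    Fintype.linearIndependent_iff.mp hli2 _ h1
  have hex : ∃ k₀, g i₀ k₀ ≠ 0 := by
    by_contra hcon
    push_neg at hcon
    apply hc
    rw [hci i₀]
    simp [hcon]
  obtain ⟨k₀, hk₀⟩ := hex
  exact ⟨fun i => g i k₀, hk₀, key k₀⟩

end Aux3

theorem aux_qsum {R M : Type*} [CommRing R] [AddCommGroup M] [Module R M]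
    (q : QuadraticForm R M) (h : ∀ x y : M, QuadraticMap.polar (⇑q) x y = 0)
    {m : ℕ} (t : Fin m → M) : q (∑ i, t i) = ∑ i, q (t i) := by
  have hadd : ∀ x y : M, q (x + y) = q x + q y := by
    intro x y
    have h2 := h x y
    rwa [QuadraticMap.polar, sub_sub, sub_eq_zero] at h2
  induction m with
  | zero => simp
  | succ m ih =>
    rw [Fin.sum_univ_castSucc, Fin.sum_univ_castSucc, hadd, ih]

/-- values in the base field of a nonzero totally singular quadratic form
descend from finite separable extensions. -/
theorem stmt_4 {F L : Type*} [Field F] [CharP F 2] [Field L] [Algebra F L]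
    [FiniteDimensional F L] [Algebra.IsSeparable F L]
    {V : Type*} [AddCommGroup V] [Module F V] [FiniteDimensional F V]
    (q : QuadraticForm F V)
    (hts : ∀ x y : V, QuadraticMap.polar (⇑q) x y = 0)
    (hnz : ∃ x : V, q x ≠ 0)
    (Q : QuadraticForm L (L ⊗[F] V)) (hQ : IsScalarExt F q Q)
    (a : F) (h : ∃ z : L ⊗[F] V, z ≠ 0 ∧ Q z = algebraMap F L a) :
    ∃ y : V, y ≠ 0 ∧ q y = a := by
  obtain ⟨z, hz0, hzQ⟩ := h
  haveI : CharP L 2 := charP_of_injective_algebraMap (algebraMap F L).injective 2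
  -- the polar form of Q vanishes identically
  have hpolarQ : ∀ u w : L ⊗[F] V, QuadraticMap.polar (⇑Q) u w = 0 := by
    intro u w
    induction u using TensorProduct.induction_on with
    | zero => simp [QuadraticMap.polar]
    | tmul cc x =>
      induction w using TensorProduct.induction_on with
      | zero => simp [QuadraticMap.polar]
      | tmul dd y => rw [hQ.2, hts, map_zero, mul_zero]
      | add w₁ w₂ h1 h2 => rw [QuadraticMap.polar_add_right, h1, h2, add_zero]
    | add u₁ u₂ h1 h2 => rw [QuadraticMap.polar_add_left, h1, h2, add_zero]
  set n := Module.finrank F V with hn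
  let v : Module.Basis (Fin n) F V := Module.finBasis F V
  let bL : Module.Basis (Fin n) L (L ⊗[F] V) := v.baseChange L
  set c : Fin n → L := fun i => bL.repr z i with hcdef
  have hz : z = ∑ i, c i • ((1 : L) ⊗ₜ[F] v i) := by
    conv_lhs => rw [← bL.sum_repr z]
    exact Finset.sum_congr rfl fun i _ => by rw [Module.Basis.baseChange_apply]
  have hQz : ∑ i, (c i) ^ 2 * algebraMap F L (q (v i)) = algebraMap F L a := by
    rw [← hzQ, hz, aux_qsum Q hpolarQ]
    refine (Finset.sum_congr rfl fun i _ => ?_).symm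
    rw [QuadraticMap.map_smul, hQ.1, one_pow, one_mul, smul_eq_mul, sq]
  have hqval : ∀ f : Fin n → F, q (∑ i, f i • v i) = ∑ i, (f i) ^ 2 * q (v i) := by
    intro f
    rw [aux_qsum q hts]
    refine Finset.sum_congr rfl fun i _ => ?_
    rw [QuadraticMap.map_smul, smul_eq_mul, sq]
  by_cases ha : a = 0
  · -- isotropic case
    have hcne : ∃ i₀, c i₀ ≠ 0 := by
      by_contra hcon
      push_neg at hcon
      apply hz0
      rw [hz]
      simp [hcon]
    obtain ⟨i₀, hi₀⟩ := hcne
    have hrel : ∑ i, (c i) ^ 2 * algebraMap F L (q (v i)) = 0 := by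
      rw [hQz, ha, map_zero]
    obtain ⟨f, hf0, hfrel⟩ := aux_descend (fun i => q (v i)) c i₀ hi₀ hrel
    refine ⟨∑ i, f i • v i, ?_, ?_⟩
    · intro hy0
      exact hf0 (Fintype.linearIndependent_iff.mp v.linearIndependent f hy0 i₀)
    · rw [hqval, hfrel, ha]
  · -- anisotropic value case
    set w' : Fin (n + 1) → F := Fin.snoc (fun i => q (v i)) a with hw'
    set c' : Fin (n + 1) → L := Fin.snoc c 1 with hc'
    have hrel : ∑ i, (c' i) ^ 2 * algebraMap F L (w' i) = 0 := by
      rw [Fin.sum_univ_castSucc]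
      simp only [hw', hc', Fin.snoc_castSucc, Fin.snoc_last, one_pow, one_mul]
      rw [hQz]
      exact CharTwo.add_self_eq_zero _
    obtain ⟨f, hf0, hfrel⟩ := aux_descend w' c' (Fin.last n)
      (by simp [hc', Fin.snoc_last]) hrel
    rw [Fin.sum_univ_castSucc] at hfrel
    simp only [hw', Fin.snoc_castSucc, Fin.snoc_last] at hfrel
    have hsum : ∑ i : Fin n, (f i.castSucc) ^ 2 * q (v i) = f (Fin.last n) ^ 2 * a := by
      rw [add_eq_zero_iff_eq_neg] at hfrel
      rw [hfrel, CharTwo.neg_eq]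
    set g : Fin n → F := fun i => f i.castSucc / f (Fin.last n) with hg
    have hl : f (Fin.last n) ^ 2 ≠ 0 := pow_ne_zero _ hf0
    have hqy : q (∑ i, g i • v i) = a := by
      rw [hqval]
      have e1 : ∀ i : Fin n, g i ^ 2 * q (v i)
          = (f i.castSucc ^ 2 * q (v i)) / (f (Fin.last n) ^ 2) := by
        intro i
        rw [hg, div_pow]
        ring
      rw [Finset.sum_congr rfl fun i _ => e1 i, ← Finset.sum_div, hsum]
      exact mul_div_cancel_left₀ a hl
    refine ⟨∑ i, g i • v i, ?_, hqy⟩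
    intro hy0
    apply ha
    rw [← hqy, hy0, QuadraticMap.map_zero]
end

section
/- Let F be a field of characteristic 2, let q be a totally singular quadratic form over F on a finite-dimensional F-vector space V which is not a zero form (i.e. q(x) ≠ 0 for some x), let L/F be a finite field extension, let λ ∈ L \ F, let K = F(λ) be the intermediate field generated by λ, and let a ∈ F*. If aλ is a value of q_L on some nonzero vector of L ⊗_F V, then K/F is separable or L/K is not separable. -/
open scoped TensorProduct

open IntermediateField in
/-- If a finite extension `L/F` in characteristic 2 satisfies `L = F(L²)`,
then `L/F` is separable. -/
theorem aux_sep_of_adjoin_sq_eq_top {F L : Type*} [Field F] [CharP F 2] [Field L] [Algebra F L]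
    [FiniteDimensional F L]
    (h : adjoin F (Set.range fun x : L => x ^ 2) = ⊤) :
    Algebra.IsSeparable F L := by
  haveI hL2 : CharP L 2 := charP_of_injective_algebraMap (algebraMap F L).injective 2
  haveI : Fact (Nat.Prime 2) := ⟨Nat.prime_two⟩
  -- step: `L = F(L^{2^n})` for every `n`
  have hn : ∀ n : ℕ, adjoin F (Set.range fun x : L => x ^ 2 ^ n) = ⊤ := by
    intro n
    induction n with
    | zero =>
      have : (Set.range fun x : L => x ^ 2 ^ 0) = Set.univ := by
        ext y; simp
      rw [this, adjoin_univ]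
    | succ n ih =>
      have step : ∀ y ∈ adjoin F (Set.range fun x : L => x ^ 2 ^ n),
          y ^ 2 ∈ adjoin F (Set.range fun x : L => x ^ 2 ^ (n + 1)) := by
        intro y hy
        induction hy using IntermediateField.adjoin_induction with
        | mem z hz =>
          obtain ⟨u, rfl⟩ := hz
          refine subset_adjoin F _ ⟨u, ?_⟩
          rw [← pow_mul, ← pow_succ]
        | algebraMap r =>
          rw [← map_pow]
          exact IntermediateField.algebraMap_mem _ _
        | add z w hz hw ihz ihw =>
          rw [add_pow_char]
          exact add_mem ihz ihw
        | inv z hz ihz =>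
          rw [inv_pow]
          exact inv_mem ihz
        | mul z w hz hw ihz ihw =>
          rw [mul_pow]
          exact mul_mem ihz ihw
      rw [eq_top_iff, ← h, adjoin_le_iff]
      rintro _ ⟨y, rfl⟩
      exact step y (by rw [ih]; trivial)
  -- uniform exponent for the purely inseparable part over the separable closure
  set Fs := separableClosure F L with hFs
  haveI : CharP Fs 2 := charP_of_injective_algebraMap (algebraMap F Fs).injective 2
  haveI : ExpChar Fs 2 := ExpChar.prime Nat.prime_two
  haveI : IsPurelyInseparable Fs L := separableClosure.isPurelyInseparable F L
  let b := Module.finBasis F L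
  have hpi : ∀ i, ∃ m : ℕ, (b i) ^ 2 ^ m ∈ Fs := by
    intro i
    obtain ⟨m, ⟨y, hy⟩⟩ := IsPurelyInseparable.pow_mem Fs 2 (b i)
    exact ⟨m, hy ▸ y.2⟩
  choose nf hnf using hpi
  set N := Finset.univ.sup nf with hN
  have hSN : ∀ x : L, x ^ 2 ^ N ∈ Fs := by
    intro x
    rw [← b.sum_repr x, sum_pow_char_pow]
    refine sum_mem fun i _ => ?_
    rw [Algebra.smul_def, mul_pow, ← map_pow]
    refine mul_mem (IntermediateField.algebraMap_mem _ _) ?_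
    have hle : nf i ≤ N := Finset.le_sup (Finset.mem_univ i)
    have : (2 : ℕ) ^ N = 2 ^ nf i * 2 ^ (N - nf i) := by
      rw [← pow_add, Nat.add_sub_cancel' hle]
    rw [this, pow_mul]
    exact pow_mem (hnf i) _
  have htop : (⊤ : IntermediateField F L) ≤ Fs := by
    rw [← hn N, adjoin_le_iff]
    rintro _ ⟨x, rfl⟩
    exact hSN x
  rw [← separableClosure.eq_top_iff]
  exact le_antisymm le_top htop

/-- if `a·λ` (with `a ∈ F*`, `λ ∈ L \ F`) is a nonzero value of the scalar
extension of a nonzero totally singular quadratic form, then `F(λ)/F` is separable or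
`L/F(λ)` is not separable. -/
theorem stmt_5 {F L : Type*} [Field F] [CharP F 2] [Field L] [Algebra F L]
    [FiniteDimensional F L]
    {V : Type*} [AddCommGroup V] [Module F V] [FiniteDimensional F V]
    (q : QuadraticForm F V)
    (hts : ∀ x y : V, QuadraticMap.polar (⇑q) x y = 0)
    (hnz : ∃ x : V, q x ≠ 0)
    (Q : QuadraticForm L (L ⊗[F] V)) (hQ : IsScalarExt F q Q)
    (lam : L) (hlam : lam ∉ Set.range (algebraMap F L))
    (a : F) (ha : a ≠ 0)
    (h : ∃ z : L ⊗[F] V, z ≠ 0 ∧ Q z = algebraMap F L a * lam) :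
    Algebra.IsSeparable F (IntermediateField.adjoin F {lam}) ∨
      ¬ Algebra.IsSeparable (IntermediateField.adjoin F {lam}) L := by
  classical
  by_cases hsep : Algebra.IsSeparable (IntermediateField.adjoin F {lam}) L
  swap
  · exact Or.inr hsep
  left
  haveI hL2 : CharP L 2 := charP_of_injective_algebraMap (algebraMap F L).injective 2
  -- the polar form of `Q` vanishes identically
  have hpolar : ∀ z w : L ⊗[F] V, QuadraticMap.polar (⇑Q) z w = 0 := by
    intro z w
    induction z using TensorProduct.induction_on with
    | zero => exact QuadraticMap.polar_zero_left _ _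
    | tmul c x =>
      induction w using TensorProduct.induction_on with
      | zero => exact QuadraticMap.polar_zero_right _ _
      | tmul d y => rw [hQ.2, hts, map_zero, mul_zero]
      | add w1 w2 h1 h2 => rw [QuadraticMap.polar_add_right, h1, h2, add_zero]
    | add z1 z2 h1 h2 => rw [QuadraticMap.polar_add_left, h1, h2, add_zero]
  have hadd : ∀ z w : L ⊗[F] V, Q (z + w) = Q z + Q w := by
    intro z w
    have := hpolar z w
    rw [QuadraticMap.polar, sub_sub, sub_eq_zero] at this
    exact this
  -- every value of `Q` lies in `E := F(L²)`
  set E := IntermediateField.adjoin F (Set.range fun x : L => x ^ 2) with hE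
  have hQE : ∀ z : L ⊗[F] V, Q z ∈ E := by
    intro z
    induction z using TensorProduct.induction_on with
    | zero => rw [QuadraticMap.map_zero]; exact zero_mem E
    | tmul c x =>
      rw [hQ.1]
      exact mul_mem (IntermediateField.subset_adjoin F _ ⟨c, rfl⟩)
        (IntermediateField.algebraMap_mem _ _)
    | add z w hz hw => rw [hadd]; exact add_mem hz hw
  -- hence `λ ∈ E`
  have hlamE : lam ∈ E := by
    obtain ⟨z, -, hzv⟩ := h
    have hmem : algebraMap F L a * lam ∈ E := hzv ▸ hQE z
    have hA : algebraMap F L a ≠ 0 := by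
      simpa using ha
    have : lam = algebraMap F L a⁻¹ * (algebraMap F L a * lam) := by
      rw [map_inv₀, inv_mul_cancel_left₀ hA]
    rw [this]
    exact mul_mem (IntermediateField.algebraMap_mem _ _) hmem
  have hKE : IntermediateField.adjoin F {lam} ≤ E :=
    IntermediateField.adjoin_le_iff.2 (Set.singleton_subset_iff.2 hlamE)
  -- `L` is separable over `E` (tower top) and purely inseparable over `E`, hence `E = L`
  set E' := IntermediateField.extendScalars hKE with hE'
  haveI : Algebra.IsSeparable E' L :=
    Algebra.isSeparable_tower_top_of_isSeparable (IntermediateField.adjoin F {lam}) E' L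
  haveI : CharP E' 2 := (algebraMap E' L).charP (algebraMap E' L).injective 2
  haveI : ExpChar E' 2 := ExpChar.prime Nat.prime_two
  haveI : IsPurelyInseparable E' L := by
    rw [isPurelyInseparable_iff_pow_mem E' 2]
    intro x
    have hx2 : x ^ 2 ^ 1 ∈ E := by
      rw [pow_one]
      exact IntermediateField.subset_adjoin F _ ⟨x, rfl⟩
    exact ⟨1, ⟨⟨x ^ 2 ^ 1, hx2⟩, rfl⟩⟩
  have hEtop : E = ⊤ := by
    rw [eq_top_iff]
    intro x _
    obtain ⟨y, hy⟩ := IsPurelyInseparable.surjective_algebraMap_of_isSeparable E' L x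
    exact hy ▸ y.2
  haveI : Algebra.IsSeparable F L := aux_sep_of_adjoin_sq_eq_top (hE ▸ hEtop)
  exact Algebra.isSeparable_tower_bot_of_isSeparable F (IntermediateField.adjoin F {lam}) L
end

section
/- Let F be a field of characteristic 2, let q be an anisotropic totally singular quadratic form over F on a finite-dimensional F-vector space V, and let L/F be a separable algebraic field extension. Then the scalar extension q_L is anisotropic over L. -/
set_option synthInstance.maxHeartbeats 400000
set_option maxHeartbeats 1000000

open scoped TensorProduct
open Polynomial

universe v

lemma fixed_mem_range {F L : Type*} [Field F] [Field L] [Algebra F L]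
    [Algebra.IsAlgebraic F L] (x : L) (hsep : IsSeparable F x)
    (h : ∀ σ : L →ₐ[F] AlgebraicClosure L, σ x = algebraMap L (AlgebraicClosure L) x) :
    x ∈ (algebraMap F L).range := by
  classical
  set M := AlgebraicClosure L
  have hint : IsIntegral F x := hsep.isIntegral
  have hrange := Algebra.IsAlgebraic.range_eval_eq_rootSet_minpoly_of_splits (F := F) (K := L) M
    (fun y => IsAlgClosed.splits _) x
  have hsingle : (minpoly F x).rootSet M = {algebraMap L M x} := by
    rw [← hrange]
    apply Set.eq_singleton_iff_unique_mem.mpr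
    exact ⟨⟨IsScalarTower.toAlgHom F L M, rfl⟩, fun y ⟨σ, hσ⟩ => by simp only at hσ; rw [← hσ, h σ]⟩
  have hcard : Fintype.card ((minpoly F x).rootSet M) = (minpoly F x).natDegree :=
    card_rootSet_eq_natDegree hsep (IsAlgClosed.splits _)
  have hcard' : Fintype.card ((minpoly F x).rootSet M) = 1 := by
    apply Fintype.card_eq_one_iff.mpr
    refine ⟨⟨algebraMap L M x, hsingle ▸ rfl⟩, fun y => Subtype.ext ?_⟩
    have : (y : M) ∈ ({algebraMap L M x} : Set M) := hsingle ▸ y.2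
    exact this
  have hnd : (minpoly F x).natDegree = 1 := hcard.symm.trans hcard'
  rw [← minpoly.degree_eq_one_iff, degree_eq_natDegree (minpoly.ne_zero hint), hnd]
  rfl

lemma key_lemma (F : Type*) [Field F] [CharP F 2] {ι : Type*} (a : ι → F)
    (ha : ∀ (s : Finset ι) (t : ι → F), ∑ i ∈ s, t i ^ 2 * a i = 0 → ∀ i ∈ s, t i = 0) :
    ∀ (n : ℕ) (L : Type v) [Field L] [Algebra F L]
    [Algebra.IsAlgebraic F L] [Algebra.IsSeparable F L] (s : Finset ι), s.card ≤ n →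
    ∀ c : ι → L, (∑ i ∈ s, c i ^ 2 * algebraMap F L (a i)) = 0 → ∀ i ∈ s, c i = 0 := by
  intro n
  induction n with
  | zero =>
    intro L _ _ _ _ s hs c hrel i hi
    rw [Nat.le_zero, Finset.card_eq_zero] at hs
    simp [hs] at hi
  | succ n IH =>
    intro L _ _ _ _ s hs c hrel
    classical
    by_contra hcon
    push_neg at hcon
    obtain ⟨j, hj, hcj⟩ := hcon
    set M := AlgebraicClosure L with hM
    let ι' : L →ₐ[F] M := IsScalarTower.toAlgHom F L M
    -- normalize
    set c' : ι → L := fun i => c i / c j with hc'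
    have hc'j : c' j = 1 := div_self hcj
    have hrel' : ∑ i ∈ s, c' i ^ 2 * algebraMap F L (a i) = 0 := by
      have : ∑ i ∈ s, c' i ^ 2 * algebraMap F L (a i)
          = (c j ^ 2)⁻¹ * ∑ i ∈ s, c i ^ 2 * algebraMap F L (a i) := by
        rw [Finset.mul_sum]
        refine Finset.sum_congr rfl fun i _ => ?_
        simp only [hc', div_pow]
        field_simp
      rw [this, hrel, mul_zero]
    -- separability of images
    have hsepL : ∀ z : L, IsSeparable F z := fun z => Algebra.IsSeparable.isSeparable F z
    have hsepmap : ∀ (τ : L →ₐ[F] M) (z : L), IsSeparable F (τ z) := by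
      intro τ z
      have : minpoly F (τ z) = minpoly F z := minpoly.algHom_eq τ τ.injective z
      unfold IsSeparable
      rw [this]
      exact hsepL z
    -- key claim: every σ fixes c' i for i ∈ s
    have hfix : ∀ i ∈ s, ∀ σ : L →ₐ[F] M, σ (c' i) = ι' (c' i) := by
      intro i hi σ
      -- relations in M
      have hrelι : ∑ i ∈ s, (ι' (c' i)) ^ 2 * algebraMap F M (a i) = 0 := by
        have := congrArg ι' hrel'
        rw [map_sum, map_zero] at this
        simpa [mul_comm, ← IsScalarTower.algebraMap_apply] using this
      have hrelσ : ∑ i ∈ s, (σ (c' i)) ^ 2 * algebraMap F M (a i) = 0 := by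
        have := congrArg σ hrel'
        rw [map_sum, map_zero] at this
        simpa using this
      haveI : CharP M 2 := charP_of_injective_algebraMap (algebraMap F M).injective 2
      set d : ι → M := fun i => ι' (c' i) - σ (c' i) with hd
      have hsq : ∀ i, d i ^ 2 = (ι' (c' i)) ^ 2 - (σ (c' i)) ^ 2 := by
        intro i
        have h2 : (2 : M) = 0 := by exact_mod_cast CharP.cast_eq_zero M 2
        have hx : d i ^ 2 = (ι' (c' i)) ^ 2 - (σ (c' i)) ^ 2
            + 2 * ((σ (c' i)) ^ 2 - ι' (c' i) * σ (c' i)) := by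
          rw [hd]; ring
        rw [hx, h2, zero_mul, add_zero]
      have hreld : ∑ i ∈ s, d i ^ 2 * algebraMap F M (a i) = 0 := by
        calc ∑ i ∈ s, d i ^ 2 * algebraMap F M (a i)
            = ∑ i ∈ s, ((ι' (c' i)) ^ 2 * algebraMap F M (a i)
              - (σ (c' i)) ^ 2 * algebraMap F M (a i)) := by
              refine Finset.sum_congr rfl fun i _ => ?_
              rw [hsq, sub_mul]
          _ = 0 := by rw [Finset.sum_sub_distrib, hrelι, hrelσ, sub_zero]
      have hdj : d j = 0 := by simp [hd, hc'j]
      have hreld' : ∑ i ∈ s.erase j, d i ^ 2 * algebraMap F M (a i) = 0 := by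
        have h0 := Finset.sum_erase_add s (fun i => d i ^ 2 * algebraMap F M (a i)) hj
        rw [hreld] at h0
        simpa [hdj] using h0
      -- descend to separable closure
      set S := separableClosure F M with hS
      have hmem : ∀ i ∈ s, d i ∈ S := by
        intro i _
        exact S.sub_mem (mem_separableClosure_iff.mpr (hsepmap ι' (c' i)))
          (mem_separableClosure_iff.mpr (hsepmap σ (c' i)))
      set e : ι → S := fun i => if h : i ∈ s then ⟨d i, hmem i h⟩ else 0 with he
      have hrelS : ∑ i ∈ s.erase j, e i ^ 2 * algebraMap F S (a i) = 0 := by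
        have hmapped : algebraMap S M (∑ i ∈ s.erase j, e i ^ 2 * algebraMap F S (a i)) = 0 := by
          rw [map_sum, ← hreld']
          refine Finset.sum_congr rfl fun x hx => ?_
          have hxs : x ∈ s := Finset.mem_of_mem_erase hx
          rw [map_mul, map_pow, ← IsScalarTower.algebraMap_apply]
          congr 2
          simp [he, hxs]
        exact (algebraMap S M).injective (by rw [hmapped]; exact (map_zero _).symm)
      haveI : Algebra.IsSeparable F S := separableClosure.isSeparable F M
      haveI : Algebra.IsAlgebraic F S := Algebra.IsSeparable.isAlgebraic F S
      have hz := IH S (s.erase j) (by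
        have := Finset.card_erase_of_mem hj
        omega) e hrelS
      -- get d i = 0
      rcases eq_or_ne i j with rfl | hij
      · rw [hc'j, map_one, map_one]
      · have : e i = 0 := hz i (Finset.mem_erase.mpr ⟨hij, hi⟩)
        have hdi : d i = 0 := by
          have := congrArg (Subtype.val) this
          simpa [he, hi] using this
        have := sub_eq_zero.mp (hd ▸ hdi)
        exact this.symm
    -- now each c' i is in the base field
    have hbase : ∀ i ∈ s, ∃ t : F, algebraMap F L t = c' i := by
      intro i hi
      obtain ⟨t, ht⟩ := fixed_mem_range (c' i) (hsepL (c' i)) (fun σ => hfix i hi σ)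
      exact ⟨t, ht⟩
    choose! t ht using hbase
    have hrelF : ∑ i ∈ s, t i ^ 2 * a i = 0 := by
      apply (algebraMap F L).injective
      rw [map_sum, map_zero]
      refine hrel'.symm ▸ Finset.sum_congr rfl fun i hi => ?_
      rw [map_mul, map_pow, ht i hi]
    have : t j = 0 := ha s t hrelF j hj
    have : c' j = 0 := by rw [← ht j hj, this, map_zero]
    rw [hc'j] at this
    exact one_ne_zero this

/-- an anisotropic totally singular quadratic form in characteristic 2 stays
anisotropic under separable algebraic field extensions. -/
theorem stmt_6 {F L : Type*} [Field F] [CharP F 2] [Field L] [Algebra F L]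
    [Algebra.IsAlgebraic F L] [Algebra.IsSeparable F L]
    {V : Type*} [AddCommGroup V] [Module F V] [FiniteDimensional F V]
    (q : QuadraticForm F V)
    (hts : ∀ x y : V, QuadraticMap.polar (⇑q) x y = 0)
    (han : q.Anisotropic)
    (Q : QuadraticForm L (L ⊗[F] V)) (hQ : IsScalarExt F q Q) :
    Q.Anisotropic := by
  classical
  -- polar of Q vanishes
  have hpol : ∀ z w : L ⊗[F] V, QuadraticMap.polar (⇑Q) z w = 0 := by
    intro z w
    induction z using TensorProduct.induction_on with
    | zero => exact QuadraticMap.polar_zero_left Q w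
    | tmul c x =>
      induction w using TensorProduct.induction_on with
      | zero => exact QuadraticMap.polar_zero_right Q _
      | tmul d y => rw [hQ.2 c d x y, hts x y, map_zero, mul_zero]
      | add w₁ w₂ h1 h2 => rw [QuadraticMap.polar_add_right, h1, h2, add_zero]
    | add z₁ z₂ h1 h2 => rw [QuadraticMap.polar_add_left, h1, h2, add_zero]
  have hadd : ∀ z w : L ⊗[F] V, Q (z + w) = Q z + Q w := by
    intro z w
    have := hpol z w
    rw [QuadraticMap.polar] at this
    linear_combination this
  have haddF : ∀ x y : V, q (x + y) = q x + q y := by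
    intro x y
    have := hts x y
    rw [QuadraticMap.polar] at this
    linear_combination this
  have hsumQ : ∀ (ι : Type) (s : Finset ι) (g : ι → L ⊗[F] V),
      Q (∑ i ∈ s, g i) = ∑ i ∈ s, Q (g i) := by
    intro ι s g
    induction s using Finset.induction_on with
    | empty => simp
    | insert _ _ h ih => rw [Finset.sum_insert h, Finset.sum_insert h, hadd, ih]
  have hsumq : ∀ (ι : Type) (s : Finset ι) (g : ι → V),
      q (∑ i ∈ s, g i) = ∑ i ∈ s, q (g i) := by
    intro ι s g
    induction s using Finset.induction_on with
    | empty => simp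
    | insert _ _ h ih => rw [Finset.sum_insert h, Finset.sum_insert h, haddF, ih]
  -- basis
  set n := Module.finrank F V
  set b : Module.Basis (Fin n) F V := Module.finBasis F V with hb
  set a : Fin n → F := fun i => q (b i) with hA
  have ha : ∀ (s : Finset (Fin n)) (t : Fin n → F),
      ∑ i ∈ s, t i ^ 2 * a i = 0 → ∀ i ∈ s, t i = 0 := by
    intro s t hrel
    have hx : q (∑ i ∈ s, t i • b i) = 0 := by
      rw [hsumq]
      rw [← hrel]
      refine Finset.sum_congr rfl fun i _ => ?_
      rw [QuadraticMap.map_smul, smul_eq_mul, pow_two]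
    have := han _ hx
    exact linearIndependent_iff'.mp b.linearIndependent s t this
  -- main
  intro z hz
  set bc : Module.Basis (Fin n) L (L ⊗[F] V) := b.baseChange L with hbc
  set c : Fin n → L := fun i => bc.repr z i with hc
  have hzc : z = ∑ i ∈ Finset.univ, c i ⊗ₜ[F] b i := by
    conv_lhs => rw [← bc.sum_repr z]
    refine Finset.sum_congr rfl fun i _ => ?_
    rw [hbc, Module.Basis.baseChange_apply, TensorProduct.smul_tmul', smul_eq_mul, mul_one]
  have hQz : ∑ i ∈ Finset.univ, c i ^ 2 * algebraMap F L (a i) = 0 := by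
    rw [← hz, hzc, hsumQ]
    refine Finset.sum_congr rfl fun i _ => ?_
    rw [hQ.1]
  have hc0 := key_lemma F a ha (Finset.univ.card) L Finset.univ le_rfl c hQz
  rw [hzc]
  refine Finset.sum_eq_zero fun i hi => ?_
  rw [hc0 i hi, TensorProduct.zero_tmul]
end

section
/- Let F be a field of characteristic 2, let b be an anisotropic symmetric bilinear form on a finite-dimensional F-vector space V (i.e. b(x,x) = 0 implies x = 0), and let L/F be a separable algebraic field extension. Then the base change b_L of b to L ⊗_F V is anisotropic over L. -/
open scoped TensorProduct

/-- Every element of `L ⊗[F] V` can be written as a finite sum `∑ i, l i ⊗ v i`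
with the `l i` linearly independent over `F`. -/
lemma exists_li_repr {F L V : Type*} [Field F] [Field L] [Algebra F L]
    [AddCommGroup V] [Module F V] (z : L ⊗[F] V) :
    ∃ (n : ℕ) (l : Fin n → L) (v : Fin n → V),
      LinearIndependent F l ∧ z = ∑ i, l i ⊗ₜ[F] v i := by
  classical
  obtain ⟨S, hS⟩ := TensorProduct.exists_finsupp_left z
  set W := Submodule.span F (S.support : Set L) with hW
  have hfd : FiniteDimensional F W :=
    FiniteDimensional.span_of_finite F S.support.finite_toSet
  set n := Module.finrank F W with hn
  let bW : Module.Basis (Fin n) F W := Module.finBasis F W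
  have hmem : ∀ x ∈ S.support, x ∈ W := fun x hx =>
    Submodule.subset_span (by exact_mod_cast hx)
  refine ⟨n, fun i => (bW i : L),
    fun i => ∑ x ∈ S.support.attach, (bW.repr ⟨x.1, hmem x.1 x.2⟩ i) • S x.1, ?_, ?_⟩
  · exact bW.linearIndependent.map' W.subtype W.ker_subtype
  · rw [hS, Finsupp.sum]
    rw [← Finset.sum_attach S.support (fun x => x ⊗ₜ[F] S x)]
    simp_rw [TensorProduct.tmul_sum, TensorProduct.tmul_smul]
    rw [Finset.sum_comm]
    refine Finset.sum_congr rfl fun x _ => ?_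
    have key : ∀ (c : W) (m : V),
        (c : L) ⊗ₜ[F] m = ∑ i, bW.repr c i • ((bW i : L) ⊗ₜ[F] m) := by
      intro c m
      conv_lhs => rw [← bW.sum_repr c]
      push_cast
      rw [TensorProduct.sum_tmul]
      exact Finset.sum_congr rfl fun i _ => by
        rw [TensorProduct.smul_tmul, TensorProduct.tmul_smul]
    exact key ⟨x.1, hmem x.1 x.2⟩ (S x.1)

/-- an anisotropic symmetric bilinear form over a field of characteristic 2
stays anisotropic under separable algebraic field extensions. -/
theorem stmt_7 {F L : Type*} [Field F] [CharP F 2] [Field L] [Algebra F L]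
    [Algebra.IsAlgebraic F L] [Algebra.IsSeparable F L]
    {V : Type*} [AddCommGroup V] [Module F V] [FiniteDimensional F V]
    (b : LinearMap.BilinForm F V) (hsymm : b.IsSymm)
    (han : ∀ x : V, b x x = 0 → x = 0) :
    ∀ z : L ⊗[F] V, LinearMap.BilinForm.baseChange L b z z = 0 → z = 0 := by
  classical
  haveI : CharP L 2 := charP_of_injective_algebraMap (algebraMap F L).injective 2
  haveI : ExpChar F 2 := ExpChar.prime Nat.prime_two
  intro z hz
  obtain ⟨n, l, v, hli, rfl⟩ := exists_li_repr z
  -- expand the bilinear form on the double sum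
  have hexp : (LinearMap.BilinForm.baseChange L b) (∑ i, l i ⊗ₜ[F] v i) (∑ i, l i ⊗ₜ[F] v i)
      = ∑ i, ∑ j, (b (v i) (v j)) • (l i * l j) := by
    simp only [map_sum, LinearMap.sum_apply, LinearMap.BilinForm.baseChange_tmul]
    rw [Finset.sum_comm]
  rw [hexp] at hz
  -- off-diagonal terms cancel in characteristic 2
  have hdiag : ∑ i, (b (v i) (v i)) • (l i * l i) = 0 := by
    rw [← hz, ← Finset.sum_product']
    rw [← Finset.sum_filter_add_sum_filter_not (Finset.univ ×ˢ Finset.univ)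
      (fun p : Fin n × Fin n => p.1 = p.2)]
    have h1 : ∑ p ∈ (Finset.univ ×ˢ Finset.univ).filter
        (fun p : Fin n × Fin n => p.1 = p.2), (b (v p.1) (v p.2)) • (l p.1 * l p.2)
        = ∑ i, (b (v i) (v i)) • (l i * l i) := by
      rw [Finset.sum_filter]
      rw [Finset.sum_product]
      refine Finset.sum_congr rfl fun i _ => ?_
      simp
    have h2 : ∑ p ∈ (Finset.univ ×ˢ Finset.univ).filter
        (fun p : Fin n × Fin n => ¬ p.1 = p.2), (b (v p.1) (v p.2)) • (l p.1 * l p.2) = 0 := by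
      refine Finset.sum_involution (fun p _ => p.swap) (fun p hp => ?_)
        (fun p hp h => ?_) (fun p hp => ?_) (fun p hp => Prod.swap_swap p)
      · have hsy : b (v p.2) (v p.1) = b (v p.1) (v p.2) := (hsymm.eq (v p.1) (v p.2)).symm
        rw [Prod.fst_swap, Prod.snd_swap, hsy, mul_comm (l p.2), ← add_smul]
        rw [show b (v p.1) (v p.2) + b (v p.1) (v p.2) = 0 from CharTwo.add_self_eq_zero _]
        rw [zero_smul]
      · simp only [Finset.mem_filter] at hp
        exact fun hps => hp.2 ((Prod.ext_iff.mp hps).2)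
      · simp only [Finset.mem_filter, Finset.mem_product, Finset.mem_univ, true_and] at hp ⊢
        exact fun h => hp (h.symm)
    rw [h1, h2, add_zero]
  -- linear independence of squares via separability
  have hli2 : LinearIndependent F (fun i => l i ^ 2 ^ 1) :=
    hli.map_pow_expChar_pow_of_isSeparable 2 1
  have hzero : ∀ i, b (v i) (v i) = 0 := by
    have := (Fintype.linearIndependent_iff.mp hli2) (fun i => b (v i) (v i)) ?_
    · exact this
    · rw [← hdiag]
      exact Finset.sum_congr rfl fun i _ => by ring_nf
  have hv : ∀ i, v i = 0 := fun i => han _ (hzero i)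
  simp [hv]
end

section
/- Let F be a field of characteristic 2, let q and q' be totally singular quadratic forms over F on finite-dimensional F-vector spaces, and let L/F be a separable algebraic field extension. If the scalar extensions q_L and q'_L are isometric over L, then q and q' are isometric over F. -/
open scoped TensorProduct

/-- `F` viewed as a module over itself through the Frobenius `c ↦ c ^ 2`. -/
def SqTwist (F : Type*) : Type _ := F

instance (F : Type*) [Field F] : AddCommGroup (SqTwist F) :=
  inferInstanceAs (AddCommGroup F)

noncomputable instance (F : Type*) [Field F] [CharP F 2] : Module F (SqTwist F) :=
  Module.compHom F (frobenius F 2)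

/-- The identity map `F → SqTwist F`. -/
def toSq {F : Type*} : F → SqTwist F := id

lemma toSq_add {F : Type*} [Field F] (a b : F) : toSq (a + b) = toSq a + toSq b := rfl

lemma smul_toSq {F : Type*} [Field F] [CharP F 2] (c a : F) :
    c • toSq a = toSq (c ^ 2 * a) := by
  show (frobenius F 2 c * a : F) = c ^ 2 * a
  rw [frobenius_def]

/-- A totally singular quadratic form as a linear map into the Frobenius twist. -/
noncomputable def tsLin {F V : Type*} [Field F] [CharP F 2] [AddCommGroup V] [Module F V]
    (q : QuadraticForm F V) (hts : ∀ x y : V, QuadraticMap.polar (⇑q) x y = 0) :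
    V →ₗ[F] SqTwist F where
  toFun v := toSq (q v)
  map_add' x y := by
    have h := hts x y
    rw [QuadraticMap.polar, sub_sub, sub_eq_zero] at h
    show toSq (q (x + y)) = toSq (q x + q y)
    rw [h]
  map_smul' c v := by
    show toSq (q (c • v)) = c • toSq (q v)
    rw [smul_toSq]
    show toSq (q (c • v)) = toSq (c ^ 2 * q v)
    rw [QuadraticMap.map_smul, smul_eq_mul, sq]

lemma tsLin_apply {F V : Type*} [Field F] [CharP F 2] [AddCommGroup V] [Module F V]
    (q : QuadraticForm F V) (hts) (v : V) : tsLin q hts v = toSq (q v) := rfl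

/-- Key separability descent: an `L²`-linear relation among elements of `F` (with a unit
coefficient somewhere) can be replaced by an `F²`-linear relation. -/
lemma key_descent {F L : Type*} [Field F] [CharP F 2] [Field L] [Algebra F L]
    [Algebra.IsSeparable F L] {κ : Type*} [Fintype κ] (μ : κ → L) (β : κ → F)
    (h : ∑ k, μ k ^ 2 * algebraMap F L (β k) = 0) (k₀ : κ) (hk₀ : μ k₀ = 1) :
    ∃ c : κ → F, c k₀ = 1 ∧ ∑ k, c k ^ 2 * β k = 0 := by
  haveI : CharP L 2 := charP_of_injective_algebraMap (algebraMap F L).injective 2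
  haveI : ExpChar F 2 := .prime Nat.prime_two
  set M := Submodule.span F (Set.range μ) with hM
  haveI : Module.Finite F M := Module.Finite.span_of_finite F (Set.finite_range μ)
  let b := Module.finBasis F M
  set m := Module.finrank F M
  let μM : κ → M := fun k => ⟨μ k, Submodule.subset_span ⟨k, rfl⟩⟩
  let t : κ → Fin m → F := fun k j => b.repr (μM k) j
  have hμ : ∀ k, μ k = ∑ j, t k j • (b j : L) := by
    intro k
    have := b.sum_repr (μM k)
    calc μ k = ((μM k : M) : L) := rfl
      _ = ((∑ j, t k j • b j : M) : L) := by rw [this]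
      _ = ∑ j, t k j • (b j : L) := by push_cast; rfl
  have hli : LinearIndependent F (fun j => (b j : L)) :=
    b.linearIndependent.map' M.subtype M.ker_subtype
  have hli2 : LinearIndependent F (fun j => (b j : L) ^ 2) := by
    have := hli.map_pow_expChar_pow_of_isSeparable (E := L) 2 1
    simpa using this
  have hrel : ∀ j, ∑ k, t k j ^ 2 * β k = 0 := by
    have hsum : ∑ j, (∑ k, t k j ^ 2 * β k) • ((b j : L) ^ 2) = 0 := by
      rw [← h]
      calc ∑ j, (∑ k, t k j ^ 2 * β k) • ((b j : L) ^ 2)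
          = ∑ j, ∑ k, (t k j ^ 2 * β k) • ((b j : L) ^ 2) := by
            simp [Finset.sum_smul]
        _ = ∑ k, ∑ j, (t k j ^ 2 * β k) • ((b j : L) ^ 2) := Finset.sum_comm
        _ = ∑ k, μ k ^ 2 * algebraMap F L (β k) := by
            refine Finset.sum_congr rfl fun k _ => ?_
            rw [hμ k, sum_pow_char, Finset.sum_mul]
            refine Finset.sum_congr rfl fun j _ => ?_
            rw [smul_pow, smul_mul_assoc, Algebra.smul_def, Algebra.smul_def, map_mul, map_pow]
            ring
    intro j
    exact Fintype.linearIndependent_iff.mp hli2 (fun j => ∑ k, t k j ^ 2 * β k) hsum j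
  have hne : ∃ j₀, t k₀ j₀ ≠ 0 := by
    by_contra hc
    push_neg at hc
    have : μ k₀ = 0 := by
      rw [hμ k₀]
      simp [hc]
    rw [hk₀] at this
    exact one_ne_zero this
  obtain ⟨j₀, hj₀⟩ := hne
  refine ⟨fun k => t k j₀ * (t k₀ j₀)⁻¹, by field_simp, ?_⟩
  have : ∑ k, (t k j₀ * (t k₀ j₀)⁻¹) ^ 2 * β k
      = ((t k₀ j₀)⁻¹) ^ 2 * ∑ k, t k j₀ ^ 2 * β k := by
    rw [Finset.mul_sum]
    refine Finset.sum_congr rfl fun k _ => by ring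
  rw [this, hrel j₀, mul_zero]

/-- Two linear maps into the Frobenius twist with the same range, on spaces of the same
finite dimension, differ by an isomorphism of the sources. -/
lemma iso_of_range_eq {F V V' : Type*} [Field F] [CharP F 2]
    [AddCommGroup V] [Module F V] [FiniteDimensional F V]
    [AddCommGroup V'] [Module F V'] [FiniteDimensional F V']
    (f : V →ₗ[F] SqTwist F) (f' : V' →ₗ[F] SqTwist F)
    (hrange : LinearMap.range f = LinearMap.range f')
    (hdim : Module.finrank F V = Module.finrank F V') :
    ∃ e : V ≃ₗ[F] V', ∀ v, f' (e v) = f v := by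
  classical
  set K := LinearMap.ker f with hK
  set K' := LinearMap.ker f' with hK'
  let π := K.mkQ
  let π' := K'.mkQ
  let fbar : (V ⧸ K) →ₗ[F] SqTwist F := K.liftQ f le_rfl
  let fbar' : (V' ⧸ K') →ₗ[F] SqTwist F := K'.liftQ f' le_rfl
  have hfb : ∀ v, fbar (π v) = f v := fun v => rfl
  have hfb' : ∀ v, fbar' (π' v) = f' v := fun v => rfl
  have hinj : Function.Injective fbar := by
    rw [← LinearMap.ker_eq_bot]
    exact Submodule.ker_liftQ_eq_bot _ _ _ le_rfl
  have hinj' : Function.Injective fbar' := by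
    rw [← LinearMap.ker_eq_bot]
    exact Submodule.ker_liftQ_eq_bot _ _ _ le_rfl
  have hrg : LinearMap.range fbar = LinearMap.range fbar' := by
    rw [Submodule.range_liftQ, Submodule.range_liftQ, hrange]
  let φ : (V ⧸ K) ≃ₗ[F] (V' ⧸ K') :=
    (LinearEquiv.ofInjective fbar hinj).trans
      ((LinearEquiv.ofEq _ _ hrg).trans (LinearEquiv.ofInjective fbar' hinj').symm)
  have hφ : ∀ u, fbar' (φ u) = fbar u := by
    intro u
    have h1 : LinearEquiv.ofInjective fbar' hinj' (φ u)
        = (LinearEquiv.ofEq _ _ hrg) (LinearEquiv.ofInjective fbar hinj u) := by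
      simp [φ]
    have h2 := congrArg (Subtype.val) h1
    simpa [LinearEquiv.ofInjective_apply] using h2
  obtain ⟨s, hs⟩ := π.exists_rightInverse_of_surjective (Submodule.range_mkQ K)
  obtain ⟨s', hs'⟩ := π'.exists_rightInverse_of_surjective (Submodule.range_mkQ K')
  have hsap : ∀ u, π (s u) = u := fun u => by
    simpa using LinearMap.congr_fun hs u
  have hsap' : ∀ u, π' (s' u) = u := fun u => by
    simpa using LinearMap.congr_fun hs' u
  have hKdim : Module.finrank F K = Module.finrank F K' := by
    have h1 := Submodule.finrank_quotient_add_finrank K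
    have h2 := Submodule.finrank_quotient_add_finrank K'
    have h3 : Module.finrank F (V ⧸ K) = Module.finrank F (V' ⧸ K') := φ.finrank_eq
    omega
  let k : K ≃ₗ[F] K' := LinearEquiv.ofFinrankEq _ _ hKdim
  have hrmem : ∀ v : V, v - s (π v) ∈ K := by
    intro v
    have h0 : π (v - s (π v)) = 0 := by
      rw [map_sub, hsap, sub_self]
    have h1 : f (v - s (π v)) = 0 := by
      rw [← hfb, h0, map_zero]
    exact LinearMap.mem_ker.mpr h1
  let r : V →ₗ[F] K := (LinearMap.id - s ∘ₗ π).codRestrict K hrmem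
  let e₀ : V →ₗ[F] V' := (s' ∘ₗ (φ : (V ⧸ K) →ₗ[F] (V' ⧸ K')) ∘ₗ π)
    + (K'.subtype ∘ₗ (k : K →ₗ[F] K') ∘ₗ r)
  have hπ'e : ∀ v, π' (e₀ v) = φ (π v) := by
    intro v
    have he : e₀ v = s' (φ (π v)) + K'.subtype (k (r v)) := rfl
    have h0 : π' (K'.subtype (k (r v))) = 0 := by
      rw [Submodule.mkQ_apply, Submodule.Quotient.mk_eq_zero]
      exact (k (r v)).2
    rw [he, map_add, hsap', h0, add_zero]
  have hf'e : ∀ v, f' (e₀ v) = f v := by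
    intro v
    rw [← hfb' (e₀ v), hπ'e, hφ, hfb]
  have hinj₀ : Function.Injective e₀ := by
    rw [← LinearMap.ker_eq_bot]
    rw [Submodule.eq_bot_iff]
    intro v hv
    rw [LinearMap.mem_ker] at hv
    have h1 : π' (e₀ v) = 0 := by rw [hv, map_zero]
    rw [hπ'e] at h1
    have h2 : π v = 0 := φ.injective (by simp [h1])
    have h3 : s (π v) = 0 := by rw [h2, map_zero]
    have h4 : (r v : V) = v := by
      show v - s (π v) = v
      rw [h3, sub_zero]
    have h5 : e₀ v = K'.subtype (k (r v)) := by
      have he : e₀ v = s' (φ (π v)) + K'.subtype (k (r v)) := rfl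
      rw [he, h2, map_zero, map_zero, zero_add]
    rw [h5] at hv
    have h6 : k (r v) = 0 := Subtype.ext hv
    have h7 : r v = 0 := k.injective (by rw [h6, map_zero])
    have := congrArg (Subtype.val) h7
    rw [h4] at this
    exact this
  have hsurj₀ : Function.Surjective e₀ := by
    rw [← LinearMap.range_eq_top]
    apply Submodule.eq_top_of_finrank_eq
    rw [LinearMap.finrank_range_of_inj hinj₀, hdim]
  exact ⟨LinearEquiv.ofBijective e₀ ⟨hinj₀, hsurj₀⟩, fun v => hf'e v⟩


section Ext

variable {F L V : Type*} [Field F] [CharP F 2] [Field L] [Algebra F L]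
  [AddCommGroup V] [Module F V]
  (q : QuadraticForm F V)

lemma ext_polar_zero (hts : ∀ x y : V, QuadraticMap.polar (⇑q) x y = 0)
    (Q : QuadraticForm L (L ⊗[F] V)) (hQ : IsScalarExt F q Q) :
    ∀ z w : L ⊗[F] V, QuadraticMap.polar (⇑Q) z w = 0 := by
  intro z w
  induction z using TensorProduct.induction_on with
  | zero => exact QuadraticMap.polar_zero_left _ _
  | tmul c x =>
    induction w using TensorProduct.induction_on with
    | zero => exact QuadraticMap.polar_zero_right _ _
    | tmul d y => rw [hQ.2, hts, map_zero, mul_zero]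
    | add w₁ w₂ ih₁ ih₂ =>
      rw [QuadraticMap.polar_add_right, ih₁, ih₂, add_zero]
  | add z₁ z₂ ih₁ ih₂ =>
    rw [QuadraticMap.polar_add_left, ih₁, ih₂, add_zero]

lemma ext_add (hts : ∀ x y : V, QuadraticMap.polar (⇑q) x y = 0)
    (Q : QuadraticForm L (L ⊗[F] V)) (hQ : IsScalarExt F q Q) :
    ∀ z w : L ⊗[F] V, Q (z + w) = Q z + Q w := by
  intro z w
  have h := ext_polar_zero q hts Q hQ z w
  rw [QuadraticMap.polar, sub_sub, sub_eq_zero] at h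
  exact h

lemma ext_val [FiniteDimensional F V]
    (hts : ∀ x y : V, QuadraticMap.polar (⇑q) x y = 0)
    (Q : QuadraticForm L (L ⊗[F] V)) (hQ : IsScalarExt F q Q)
    (z : L ⊗[F] V) :
    Q z = ∑ i, ((Module.finBasis F V).baseChange L).repr z i ^ 2 *
      algebraMap F L (q (Module.finBasis F V i)) := by
  set b := Module.finBasis F V
  set c := (b.baseChange L).repr z with hc
  have hz : z = ∑ i, c i ⊗ₜ[F] b i := by
    conv_lhs => rw [← (b.baseChange L).sum_repr z]
    refine Finset.sum_congr rfl fun i _ => ?_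
    rw [Module.Basis.baseChange_apply, TensorProduct.smul_tmul', smul_eq_mul, mul_one]
  let QA : (L ⊗[F] V) →+ L := AddMonoidHom.mk' ⇑Q (ext_add q hts Q hQ)
  calc Q z = QA (∑ i, c i ⊗ₜ[F] b i) := by rw [← hz]; rfl
    _ = ∑ i, Q (c i ⊗ₜ[F] b i) := by rw [map_sum]; rfl
    _ = ∑ i, c i ^ 2 * algebraMap F L (q (b i)) := by
        exact Finset.sum_congr rfl fun i _ => hQ.1 (c i) (b i)

end Ext

lemma sub_range {F L : Type*} [Field F] [CharP F 2] [Field L] [Algebra F L]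
    [Algebra.IsSeparable F L]
    {V V' : Type*} [AddCommGroup V] [Module F V] [FiniteDimensional F V]
    [AddCommGroup V'] [Module F V'] [FiniteDimensional F V']
    (q : QuadraticForm F V) (q' : QuadraticForm F V')
    (hts : ∀ x y : V, QuadraticMap.polar (⇑q) x y = 0)
    (hts' : ∀ x y : V', QuadraticMap.polar (⇑q') x y = 0)
    (Q : QuadraticForm L (L ⊗[F] V)) (hQ : IsScalarExt F q Q)
    (Q' : QuadraticForm L (L ⊗[F] V')) (hQ' : IsScalarExt F q' Q')
    (e : (L ⊗[F] V) ≃ₗ[L] (L ⊗[F] V')) (he : ∀ z, Q' (e z) = Q z)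
    (v : V) : ∃ x : V', q' x = q v := by
  classical
  haveI : CharP L 2 := charP_of_injective_algebraMap (algebraMap F L).injective 2
  set b' := Module.finBasis F V'
  set z := e ((1 : L) ⊗ₜ[F] v) with hz
  set c := (b'.baseChange L).repr z with hc
  have h0 : algebraMap F L (q v) = ∑ i, c i ^ 2 * algebraMap F L (q' (b' i)) := by
    have h1 : Q ((1 : L) ⊗ₜ[F] v) = algebraMap F L (q v) := by
      rw [hQ.1, one_pow, one_mul]
    rw [← h1, ← he ((1 : L) ⊗ₜ[F] v), ext_val q' hts' Q' hQ' z]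
  -- set up the descent
  set μ : Sum (Fin (Module.finrank F V')) Unit → L := Sum.elim c (fun _ => 1) with hμ
  set β : Sum (Fin (Module.finrank F V')) Unit → F :=
    Sum.elim (fun i => q' (b' i)) (fun _ => q v) with hβ
  have hsum : ∑ k, μ k ^ 2 * algebraMap F L (β k) = 0 := by
    rw [Fintype.sum_sum_type]
    simp only [hμ, hβ, Sum.elim_inl, Sum.elim_inr, one_pow, one_mul]
    rw [Finset.sum_const, Finset.card_univ, Fintype.card_unit, one_smul, ← h0,
      CharTwo.add_self_eq_zero]
  obtain ⟨c', hc'1, hc'0⟩ := key_descent μ β hsum (Sum.inr ()) rfl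
  rw [Fintype.sum_sum_type] at hc'0
  simp only [hβ, Sum.elim_inl, Sum.elim_inr] at hc'0
  simp only [Fintype.sum_unique] at hc'0
  replace hc'0 : ∑ i, c' (Sum.inl i) ^ 2 * q' (b' i) + c' (Sum.inr ()) ^ 2 * q v = 0 := hc'0
  rw [hc'1, one_pow, one_mul] at hc'0
  have hqv : q v = ∑ i, c' (Sum.inl i) ^ 2 * q' (b' i) := by
    have h1 := neg_eq_of_add_eq_zero_right hc'0
    rw [← h1, CharTwo.neg_eq]
  refine ⟨∑ i, c' (Sum.inl i) • b' i, ?_⟩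
  have hx : tsLin q' hts' (∑ i, c' (Sum.inl i) • b' i)
      = toSq (∑ i, c' (Sum.inl i) ^ 2 * q' (b' i)) := by
    rw [map_sum]
    have : ∀ i, tsLin q' hts' (c' (Sum.inl i) • b' i)
        = toSq (c' (Sum.inl i) ^ 2 * q' (b' i)) := by
      intro i
      rw [map_smul, tsLin_apply, smul_toSq]
    rw [Finset.sum_congr rfl fun i _ => this i]
    show ∑ i, (c' (Sum.inl i) ^ 2 * q' (b' i)) = _
    rfl
  have : q' (∑ i, c' (Sum.inl i) • b' i) = ∑ i, c' (Sum.inl i) ^ 2 * q' (b' i) := hx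
  rw [this, hqv]

/-- totally singular quadratic forms in characteristic 2 that become isometric
over a separable algebraic extension are already isometric over the base field. -/
theorem stmt_8 {F L : Type*} [Field F] [CharP F 2] [Field L] [Algebra F L]
    [Algebra.IsAlgebraic F L] [Algebra.IsSeparable F L]
    {V V' : Type*} [AddCommGroup V] [Module F V] [FiniteDimensional F V]
    [AddCommGroup V'] [Module F V'] [FiniteDimensional F V']
    (q : QuadraticForm F V) (q' : QuadraticForm F V')
    (hts : ∀ x y : V, QuadraticMap.polar (⇑q) x y = 0)
    (hts' : ∀ x y : V', QuadraticMap.polar (⇑q') x y = 0)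
    (Q : QuadraticForm L (L ⊗[F] V)) (hQ : IsScalarExt F q Q)
    (Q' : QuadraticForm L (L ⊗[F] V')) (hQ' : IsScalarExt F q' Q')
    (hiso : ∃ e : (L ⊗[F] V) ≃ₗ[L] (L ⊗[F] V'), ∀ z, Q' (e z) = Q z) :
    ∃ e : V ≃ₗ[F] V', ∀ x, q' (e x) = q x := by
  obtain ⟨e, he⟩ := hiso
  have he' : ∀ z, Q (e.symm z) = Q' z := by
    intro z
    have h := he (e.symm z)
    rw [e.apply_symm_apply] at h
    exact h.symm
  have hdim : Module.finrank F V = Module.finrank F V' := by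
    have h1 : Module.finrank L (L ⊗[F] V) = Module.finrank L (L ⊗[F] V') := e.finrank_eq
    rwa [Module.finrank_baseChange, Module.finrank_baseChange] at h1
  have hr : LinearMap.range (tsLin q hts) = LinearMap.range (tsLin q' hts') := by
    apply le_antisymm
    · rintro y ⟨v, rfl⟩
      obtain ⟨x, hx⟩ := sub_range q q' hts hts' Q hQ Q' hQ' e he v
      exact ⟨x, congrArg toSq hx⟩
    · rintro y ⟨x, rfl⟩
      obtain ⟨v, hv⟩ := sub_range q' q hts' hts Q' hQ' Q hQ e.symm he' x
      exact ⟨v, congrArg toSq hv⟩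
  obtain ⟨e₀, he₀⟩ := iso_of_range_eq (tsLin q hts) (tsLin q' hts') hr hdim
  exact ⟨e₀, fun v => he₀ v⟩
end

section
/- Let F be a field of characteristic p > 0 and let a = (a_1,…,a_n) and b = (b_1,…,b_n) be tuples in F^n. For a field extension K/F, consider the diagonal p-forms φ_a(x) = a_1 x_1^p + ⋯ + a_n x_n^p and φ_b(x) = b_1 x_1^p + ⋯ + b_n x_n^p as functions K^n → K; say φ_a and φ_b are similar over K if there exist c ∈ K* and an invertible matrix T ∈ GL_n(K) such that φ_a(Tx) = c·φ_b(x) for all x ∈ K^n. If L/F is a separable algebraic field extension and φ_a and φ_b are similar over L, then φ_a and φ_b are similar over F. -/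
open Finset Submodule Module

/-! ### Auxiliary development -/

section TwSec

variable {F : Type*} [Field F] (p : ℕ) [ExpChar F p]

/-- Frobenius-twisted copy of `F`: an `F`-module via `t • x = t^p * x`. -/
def Tw (_p : ℕ) (F : Type*) : Type _ := F

instance : AddCommGroup (Tw p F) := inferInstanceAs (AddCommGroup F)
noncomputable instance : Module F (Tw p F) := Module.compHom F (frobenius F p)

/-- The identity, viewed as `F → Tw p F`. -/
def tw : F → Tw p F := id
/-- The identity, viewed as `Tw p F → F`. -/
def untw : Tw p F → F := id

lemma tw_smul (t : F) (x : Tw p F) : t • x = tw p (t ^ p * untw p x) := rfl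

lemma tw_add (x y : F) : tw p (x + y) = tw p x + tw p y := rfl

lemma tw_sum {ι : Type*} (s : Finset ι) (f : ι → F) :
    tw p (∑ i ∈ s, f i) = ∑ i ∈ s, tw p (f i) := by
  classical
  induction s using Finset.induction with
  | empty => rfl
  | insert _ _ h ih => rw [Finset.sum_insert h, Finset.sum_insert h, tw_add, ih]

/-- Multiplication by a nonzero scalar as a linear automorphism of `Tw p F`. -/
noncomputable def twMul (u : F) (hu : u ≠ 0) : Tw p F ≃ₗ[F] Tw p F where
  toFun x := tw p (u * untw p x)
  invFun x := tw p (u⁻¹ * untw p x)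
  map_add' x y := by show tw p (u * (untw p x + untw p y)) = _; rw [mul_add]; rfl
  map_smul' t x := by
    show tw p (u * (t ^ p * untw p x)) = tw p (t ^ p * (u * untw p x))
    ring_nf
  left_inv x := by
    show tw p (u⁻¹ * (u * untw p x)) = x
    field_simp
    rfl
  right_inv x := by
    show tw p (u * (u⁻¹ * untw p x)) = x
    field_simp
    rfl

lemma twMul_apply (u : F) (hu : u ≠ 0) (x : Tw p F) :
    twMul p u hu x = tw p (u * untw p x) := rfl

end TwSec

/-! ### A GL-equivalence lemma: tuples with the same span differ by an invertible matrix. -/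

section GLLemma

variable {K V : Type*} [Field K] [AddCommGroup V] [Module K V] {n : ℕ}

/-- The linear map `(t_i) ↦ ∑ t_i • v i`. -/
noncomputable def totalMap (v : Fin n → V) : (Fin n → K) →ₗ[K] V where
  toFun t := ∑ i, t i • v i
  map_add' x y := by simp [add_smul, Finset.sum_add_distrib]
  map_smul' r x := by simp [Finset.smul_sum, smul_smul]

lemma totalMap_apply (v : Fin n → V) (t : Fin n → K) :
    totalMap v t = ∑ i, t i • v i := rfl

lemma totalMap_single (v : Fin n → V) (j : Fin n) :
    totalMap v (fun j' => if j' = j then (1 : K) else 0) = v j := by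
  rw [totalMap_apply]
  simp [ite_smul]

lemma range_totalMap (v : Fin n → V) :
    LinearMap.range (totalMap v) = span K (Set.range v) := by
  apply le_antisymm
  · rintro x ⟨t, rfl⟩
    rw [totalMap_apply]
    exact sum_mem fun i _ => smul_mem _ _ (subset_span (Set.mem_range_self i))
  · rw [span_le]
    rintro x ⟨j, rfl⟩
    exact LinearMap.mem_range.mpr ⟨fun j' => if j' = j then (1 : K) else 0, totalMap_single v j⟩

lemma exists_unit_matrix_of_span_eq (v w : Fin n → V)
    (h : span K (Set.range v) = span K (Set.range w)) :
    ∃ S : Matrix (Fin n) (Fin n) K, IsUnit S ∧ ∀ j, w j = ∑ i, S i j • v i := by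
  classical
  set fv := totalMap (K := K) v with hfv
  set fw := totalMap (K := K) w with hfw
  have hr : LinearMap.range fw = LinearMap.range fv := by
    rw [range_totalMap, range_totalMap, h]
  set fv' : (Fin n → K) →ₗ[K] LinearMap.range fv := fv.rangeRestrict with hfv'
  have hmem : ∀ x, fw x ∈ LinearMap.range fv := fun x => hr ▸ LinearMap.mem_range_self fw x
  set fw' : (Fin n → K) →ₗ[K] LinearMap.range fv := fw.codRestrict _ hmem with hfw'
  obtain ⟨r, hrr⟩ := fv'.exists_rightInverse_of_surjective (LinearMap.range_rangeRestrict fv)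
  have hkrank : finrank K (LinearMap.ker fw) = finrank K (LinearMap.ker fv) := by
    have h1 := fv.finrank_range_add_finrank_ker
    have h2 := fw.finrank_range_add_finrank_ker
    rw [hr] at h2
    omega
  obtain ⟨q, hq⟩ := Submodule.exists_isCompl (LinearMap.ker fw)
  set π : (Fin n → K) →ₗ[K] LinearMap.ker fw := Submodule.linearProjOfIsCompl _ q hq with hπ
  set κ : (LinearMap.ker fw) ≃ₗ[K] (LinearMap.ker fv) := LinearEquiv.ofFinrankEq _ _ hkrank with hκ
  set g : (Fin n → K) →ₗ[K] (Fin n → K) :=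
    (r ∘ₗ fw') + ((LinearMap.ker fv).subtype ∘ₗ (κ.toLinearMap ∘ₗ π)) with hg
  have hgx : ∀ x, g x = r (fw' x) + ((κ (π x) : Fin n → K)) := fun x => rfl
  have hg1 : ∀ x, fv (g x) = fw x := by
    intro x
    have h1 : fv (r (fw' x)) = fw x := congrArg Subtype.val (LinearMap.congr_fun hrr (fw' x))
    have h2 : fv ((κ (π x) : Fin n → K)) = 0 := (κ (π x)).2
    rw [hgx, map_add, h1, h2, add_zero]
  have hginj : Function.Injective g := by
    rw [← LinearMap.ker_eq_bot, LinearMap.ker_eq_bot']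
    intro x hx
    have hfwx : fw x = 0 := by rw [← hg1 x, hx, map_zero]
    have hxker : x ∈ LinearMap.ker fw := hfwx
    have hfw'x : fw' x = 0 := Subtype.ext hfwx
    have hval : ((κ (π x) : Fin n → K)) = 0 := by
      rw [hgx, hfw'x, map_zero, zero_add] at hx
      exact hx
    have hκ0 : κ (π x) = 0 := Subtype.ext hval
    have hπ0 : π x = 0 := by
      apply κ.injective
      rw [hκ0]
      exact (κ.toLinearMap.map_zero).symm
    have h5 : (⟨x, hxker⟩ : LinearMap.ker fw) = 0 :=
      (Submodule.linearProjOfIsCompl_apply_left hq ⟨x, hxker⟩).symm.trans hπ0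
    exact congrArg Subtype.val h5
  have hgsurj : Function.Surjective g := LinearMap.injective_iff_surjective.mp hginj
  let ge : (Fin n → K) ≃ₗ[K] (Fin n → K) := LinearEquiv.ofBijective g ⟨hginj, hgsurj⟩
  have hmul1 : LinearMap.toMatrix' g * LinearMap.toMatrix' (ge.symm : (Fin n → K) →ₗ[K] (Fin n → K)) = 1 := by
    rw [← LinearMap.toMatrix'_comp, ← LinearMap.toMatrix'_id]
    congr 1
    apply LinearMap.ext
    intro x
    exact ge.apply_symm_apply x
  have hmul2 : LinearMap.toMatrix' (ge.symm : (Fin n → K) →ₗ[K] (Fin n → K)) * LinearMap.toMatrix' g = 1 := by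
    rw [← LinearMap.toMatrix'_comp, ← LinearMap.toMatrix'_id]
    congr 1
    apply LinearMap.ext
    intro x
    exact ge.symm_apply_apply x
  refine ⟨LinearMap.toMatrix' g, ⟨⟨_, _, hmul1, hmul2⟩, rfl⟩, ?_⟩
  intro j
  have hwj : fw (fun j' => if j' = j then (1 : K) else 0) = w j := totalMap_single w j
  rw [← hwj, ← hg1]
  rw [show fv (g fun j' => if j' = j then (1 : K) else 0)
      = ∑ i, (g fun j' => if j' = j then (1 : K) else 0) i • v i from rfl]
  refine Finset.sum_congr rfl fun i _ => ?_
  rw [LinearMap.toMatrix'_apply]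
  have hsingle : (fun j' => if j' = j then (1 : K) else 0) = Pi.single j 1 := by
    funext j'; simp [Pi.single_apply]
  rw [hsingle]

end GLLemma

/-! ### Span sandwich lemma -/

section Sandwich

variable {F : Type*} [Field F] (p : ℕ) [ExpChar F p] {n : ℕ}

lemma span_eq_span_mul_of_inclusions (u1 u2 : F) (h1 : u1 ≠ 0) (h2 : u2 ≠ 0)
    (va vb : Fin n → Tw p F)
    (H1 : ∀ j, tw p (u1 * untw p (vb j)) ∈ span F (Set.range va))
    (H2 : ∀ i, tw p (u2 * untw p (va i)) ∈ span F (Set.range vb)) :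
    span F (Set.range va) = span F (Set.range fun j => tw p (u1 * untw p (vb j))) := by
  classical
  set μ1 := twMul p u1 h1
  set μ2 := twMul p u2 h2
  set Wa := span F (Set.range va) with hWa
  set Wb := span F (Set.range vb) with hWb
  have hmap1 : Wb.map (μ1 : Tw p F →ₗ[F] Tw p F) = span F (Set.range fun j => tw p (u1 * untw p (vb j))) := by
    rw [hWb, Submodule.map_span, ← Set.range_comp]
    rfl
  have hle1 : Wb.map (μ1 : Tw p F →ₗ[F] Tw p F) ≤ Wa := by
    rw [hmap1, span_le]
    rintro x ⟨j, rfl⟩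
    exact H1 j
  have hle2 : Wa.map (μ2 : Tw p F →ₗ[F] Tw p F) ≤ Wb := by
    rw [hWa, Submodule.map_span]
    rw [span_le]
    rintro x ⟨y, ⟨i, rfl⟩, rfl⟩
    exact H2 i
  haveI : FiniteDimensional F Wb := FiniteDimensional.span_of_finite F (Set.finite_range vb)
  have hcomp : Wb.map ((μ2 : Tw p F →ₗ[F] Tw p F) ∘ₗ (μ1 : Tw p F →ₗ[F] Tw p F)) ≤ Wb := by
    rw [Submodule.map_comp]
    exact le_trans (Submodule.map_mono hle1) hle2
  have hfr : Wb.map ((μ2 : Tw p F →ₗ[F] Tw p F) ∘ₗ (μ1 : Tw p F →ₗ[F] Tw p F)) = Wb := by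
    apply Submodule.eq_of_le_of_finrank_le hcomp
    have : Wb.map ((μ2 : Tw p F →ₗ[F] Tw p F) ∘ₗ (μ1 : Tw p F →ₗ[F] Tw p F))
        = Wb.map ((μ1.trans μ2 : Tw p F ≃ₗ[F] Tw p F) : Tw p F →ₗ[F] Tw p F) := rfl
    rw [this, LinearEquiv.finrank_map_eq]
  have hWale : Wa ≤ Wb.map (μ1 : Tw p F →ₗ[F] Tw p F) := by
    have : Wa.map (μ2 : Tw p F →ₗ[F] Tw p F) ≤ (Wb.map (μ1 : Tw p F →ₗ[F] Tw p F)).map (μ2 : Tw p F →ₗ[F] Tw p F) := by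
      rw [← Submodule.map_comp, hfr]
      exact hle2
    exact (Submodule.map_le_map_iff_of_injective μ2.injective _ _).mp this
  rw [← hmap1]
  exact le_antisymm hWale hle1

end Sandwich

/-! ### The key linear functional -/

section KeyFunctional

variable {F L : Type*} [Field F] [Field L] [Algebra F L]

lemma exists_proj [Algebra.IsSeparable F L] (p : ℕ) [ExpChar F p] (c : L) (hc : c ≠ 0) :
    ∃ Θ : L →ₗ[F] F, Θ c ≠ 0 ∧ ∀ l : L, ∃ t : F, Θ (l ^ p) = t ^ p := by
  classical
  haveI : ExpChar L p := expChar_of_injective_algebraMap (algebraMap F L).injective p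
  have hp0 : p ≠ 0 := expChar_ne_zero F p
  let b : Basis _ F L := Basis.ofVectorSpace F L
  let b' := b.mapPowExpCharPowOfIsSeparable p 1
  have hb' : ∀ i, b' i = b i ^ p := by
    intro i
    show (Basis.mk _ _) i = _
    rw [Basis.mk_apply, pow_one]
  have hrc : b'.repr c ≠ 0 := fun h0 => hc (by
    have := congrArg b'.repr.symm h0
    rwa [b'.repr.symm_apply_apply, map_zero] at this)
  obtain ⟨γ, hγ⟩ : ∃ γ, b'.repr c γ ≠ 0 := by
    by_contra hcon
    push_neg at hcon
    exact hrc (Finsupp.ext hcon)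
  refine ⟨b'.coord γ, by rwa [Basis.coord_apply], fun l => ?_⟩
  have hl : l = ∑ i ∈ (b.repr l).support, b.repr l i • b i := by
    conv_lhs => rw [← b.linearCombination_repr l]
    rw [Finsupp.linearCombination_apply, Finsupp.sum]
  have hlp : l ^ p = ∑ i ∈ (b.repr l).support, (b.repr l i) ^ p • b' i := by
    conv_lhs => rw [hl]
    rw [sum_pow_char]
    exact Finset.sum_congr rfl fun i _ => by rw [smul_pow, hb']
  refine ⟨if γ ∈ (b.repr l).support then b.repr l γ else 0, ?_⟩
  rw [hlp, map_sum]
  have hcoord : ∀ i, (b'.coord γ) ((b.repr l i) ^ p • b' i)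
      = (b.repr l i) ^ p * (if i = γ then 1 else 0) := by
    intro i
    rw [map_smul, smul_eq_mul, Basis.coord_apply, Basis.repr_self, Finsupp.single_apply]
  rw [Finset.sum_congr rfl fun i _ => hcoord i]
  simp only [mul_ite, mul_one, mul_zero]
  rw [Finset.sum_ite_eq' (b.repr l).support γ (fun i => b.repr l i ^ p)]
  split_ifs with hmem
  · rfl
  · rw [zero_pow hp0]

end KeyFunctional

/-! ### Coefficient form of similarity -/

section Coeff

lemma diag_rel_iff {K : Type*} [Field K] (p : ℕ) [ExpChar K p] {n : ℕ}
    (A B : Fin n → K) (c : K) (T : Matrix (Fin n) (Fin n) K) :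
    (∀ x : Fin n → K, ∑ i, A i * (T.mulVec x) i ^ p = c * ∑ i, B i * x i ^ p)
      ↔ ∀ j, ∑ i, A i * T i j ^ p = c * B j := by
  classical
  have hp0 : p ≠ 0 := expChar_ne_zero K p
  constructor
  · intro h j
    have hx := h (Pi.single j 1)
    rw [Matrix.mulVec_single_one] at hx
    simp only [Matrix.col_apply] at hx
    have hB : ∑ i, B i * ((Pi.single j (1:K) : Fin n → K) i) ^ p = B j := by
      have hterm : ∀ i, B i * ((Pi.single j (1:K) : Fin n → K) i) ^ p = if i = j then B i else 0 := by
        intro i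
        rcases eq_or_ne i j with rfl | hij
        · simp
        · simp [Pi.single_eq_of_ne hij, zero_pow hp0, if_neg hij]
      rw [Finset.sum_congr rfl fun i _ => hterm i, Finset.sum_ite_eq' Finset.univ j B]
      simp
    rw [hx, hB]
  · intro h x
    have expand : ∀ i, (T.mulVec x) i ^ p = ∑ j, T i j ^ p * x j ^ p := by
      intro i
      rw [Matrix.mulVec, dotProduct, sum_pow_char]
      exact Finset.sum_congr rfl fun j _ => by rw [mul_pow]
    calc ∑ i, A i * (T.mulVec x) i ^ p
        = ∑ i, ∑ j, A i * (T i j ^ p * x j ^ p) := by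
          refine Finset.sum_congr rfl fun i _ => ?_
          rw [expand, Finset.mul_sum]
      _ = ∑ j, (∑ i, A i * T i j ^ p) * x j ^ p := by
          rw [Finset.sum_comm]
          refine Finset.sum_congr rfl fun j _ => ?_
          rw [Finset.sum_mul]
          exact Finset.sum_congr rfl fun i _ => by ring
      _ = ∑ j, c * (B j * x j ^ p) := by
          refine Finset.sum_congr rfl fun j _ => ?_
          rw [h j, mul_assoc]
      _ = c * ∑ i, B i * x i ^ p := by rw [← Finset.mul_sum]

end Coeff

/-! ### Main statement -/

/-- The diagonal `p`-form `x ↦ ∑ aᵢ xᵢᵖ` on `Kⁿ`. -/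
def diagPForm {K : Type*} [CommRing K] (p : ℕ) {n : ℕ} (a : Fin n → K) :
    (Fin n → K) → K :=
  fun x => ∑ i, a i * x i ^ p

/-- The diagonal `p`-forms with coefficient tuples `a, b ∈ Fⁿ` are similar over a field
extension `K` of `F`: some invertible linear change of variables takes `φ_a` to `c·φ_b`. -/
def diagPFormSimilar (F : Type*) [Field F] (K : Type*) [Field K] [Algebra F K]
    (p n : ℕ) (a b : Fin n → F) : Prop :=
  ∃ c : K, c ≠ 0 ∧ ∃ T : Matrix (Fin n) (Fin n) K, IsUnit T ∧
    ∀ x : Fin n → K,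
      diagPForm p (fun i => algebraMap F K (a i)) (T.mulVec x) =
        c * diagPForm p (fun i => algebraMap F K (b i)) x

/-- diagonal `p`-forms over a field `F` of characteristic `p > 0` that become
similar over a separable algebraic extension are already similar over `F`. -/
theorem stmt_15 {F : Type*} [Field F] (p : ℕ) [CharP F p] (hp : 0 < p)
    {L : Type*} [Field L] [Algebra F L]
    [Algebra.IsAlgebraic F L] [Algebra.IsSeparable F L]
    (n : ℕ) (a b : Fin n → F)
    (hsim : diagPFormSimilar F L p n a b) :
    diagPFormSimilar F F p n a b := by
  classical
  haveI : NeZero p := ⟨hp.ne'⟩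
  haveI hfp : Fact p.Prime := CharP.char_is_prime_of_pos F p
  haveI : ExpChar F p := ExpChar.prime hfp.out
  haveI : CharP L p := charP_of_injective_algebraMap (algebraMap F L).injective p
  haveI : ExpChar L p := ExpChar.prime hfp.out
  obtain ⟨c, hc, T, hT, hrel⟩ := hsim
  set aL : Fin n → L := fun i => algebraMap F L (a i) with haL
  set bL : Fin n → L := fun i => algebraMap F L (b i) with hbL
  have hrel' : ∀ j, ∑ i, aL i * T i j ^ p = c * bL j := by
    rw [← diag_rel_iff p aL bL c T]
    intro x
    exact hrel x
  have hdet : IsUnit T.det := (Matrix.isUnit_iff_isUnit_det T).mp hT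
  have hTU : T * T⁻¹ = 1 := Matrix.mul_nonsing_inv T hdet
  have hrel2 : ∀ k, c⁻¹ * aL k = ∑ j, bL j * (T⁻¹ j k) ^ p := by
    intro k
    have h1 : ∑ j, (c * bL j) * (T⁻¹ j k) ^ p = aL k := by
      calc ∑ j, (c * bL j) * (T⁻¹ j k) ^ p
          = ∑ j, (∑ i, aL i * T i j ^ p) * (T⁻¹ j k) ^ p :=
            Finset.sum_congr rfl fun j _ => by rw [hrel' j]
        _ = ∑ j, ∑ i, aL i * ((T i j * T⁻¹ j k) ^ p) := by
            refine Finset.sum_congr rfl fun j _ => ?_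
            rw [Finset.sum_mul]
            exact Finset.sum_congr rfl fun i _ => by rw [mul_pow]; ring
        _ = ∑ i, aL i * (∑ j, T i j * T⁻¹ j k) ^ p := by
            rw [Finset.sum_comm]
            refine Finset.sum_congr rfl fun i _ => ?_
            rw [sum_pow_char, Finset.mul_sum]
        _ = ∑ i, aL i * ((1 : Matrix (Fin n) (Fin n) L) i k) ^ p := by
            refine Finset.sum_congr rfl fun i _ => ?_
            rw [show ∑ j, T i j * T⁻¹ j k = (T * T⁻¹) i k from (Matrix.mul_apply).symm, hTU]
        _ = aL k := by
            have hterm : ∀ i, aL i * ((1 : Matrix (Fin n) (Fin n) L) i k) ^ p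
                = if i = k then aL i else 0 := by
              intro i
              rcases eq_or_ne i k with rfl | hik
              · simp [Matrix.one_apply_eq]
              · simp [Matrix.one_apply_ne hik, zero_pow (expChar_ne_zero L p), if_neg hik]
            rw [Finset.sum_congr rfl fun i _ => hterm i,
              Finset.sum_ite_eq' Finset.univ k aL]
            simp
    have h2 : aL k = c * ∑ j, bL j * (T⁻¹ j k) ^ p := by
      rw [← h1, Finset.mul_sum]
      exact Finset.sum_congr rfl fun j _ => by ring
    rw [h2, inv_mul_cancel_left₀ hc]
  obtain ⟨Θ₁, hΘ₁, hP₁⟩ := exists_proj (F := F) p c hc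
  obtain ⟨Θ₂, hΘ₂, hP₂⟩ := exists_proj (F := F) p c⁻¹ (inv_ne_zero hc)
  set c1 : F := Θ₁ c with hc1def
  set c2 : F := Θ₂ c⁻¹ with hc2def
  have H1 : ∀ j, ∃ t : Fin n → F, c1 * b j = ∑ i, t i ^ p * a i := by
    intro j
    choose t ht using fun i => hP₁ (T i j)
    refine ⟨t, ?_⟩
    have e1 : Θ₁ (c * bL j) = c1 * b j := by
      rw [show c * bL j = b j • c from by rw [Algebra.smul_def]; ring, map_smul, smul_eq_mul,
        mul_comm]
    have e2 : Θ₁ (∑ i, aL i * T i j ^ p) = ∑ i, t i ^ p * a i := by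
      rw [map_sum]
      refine Finset.sum_congr rfl fun i _ => ?_
      rw [show aL i * T i j ^ p = a i • (T i j ^ p) from by rw [Algebra.smul_def],
        map_smul, smul_eq_mul, ht i]
      ring
    rw [← e2, hrel' j]
    exact e1.symm
  have H2 : ∀ k, ∃ s : Fin n → F, c2 * a k = ∑ j, s j ^ p * b j := by
    intro k
    choose s hs using fun j => hP₂ (T⁻¹ j k)
    refine ⟨s, ?_⟩
    have e1 : Θ₂ (c⁻¹ * aL k) = c2 * a k := by
      rw [show c⁻¹ * aL k = a k • c⁻¹ from by rw [Algebra.smul_def]; ring, map_smul, smul_eq_mul,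
        mul_comm]
    have e2 : Θ₂ (∑ j, bL j * (T⁻¹ j k) ^ p) = ∑ j, s j ^ p * b j := by
      rw [map_sum]
      refine Finset.sum_congr rfl fun j _ => ?_
      rw [show bL j * (T⁻¹ j k) ^ p = b j • ((T⁻¹ j k) ^ p) from by rw [Algebra.smul_def],
        map_smul, smul_eq_mul, hs j]
      ring
    rw [← e2, ← hrel2 k]
    exact e1.symm
  have hc1 : c1 ≠ 0 := hΘ₁
  have hc2 : c2 ≠ 0 := hΘ₂
  set va : Fin n → Tw p F := fun i => tw p (a i) with hva
  set vb : Fin n → Tw p F := fun j => tw p (b j) with hvb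
  have HH1 : ∀ j, tw p (c1 * untw p (vb j)) ∈ span F (Set.range va) := by
    intro j
    obtain ⟨t, ht⟩ := H1 j
    have heq : tw p (c1 * untw p (vb j)) = ∑ i, t i • va i := by
      rw [show untw p (vb j) = b j from rfl, ht, tw_sum]
      rfl
    rw [heq]
    exact sum_mem fun i _ => smul_mem _ _ (subset_span (Set.mem_range_self i))
  have HH2 : ∀ k, tw p (c2 * untw p (va k)) ∈ span F (Set.range vb) := by
    intro k
    obtain ⟨s, hs⟩ := H2 k
    have heq : tw p (c2 * untw p (va k)) = ∑ j, s j • vb j := by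
      rw [show untw p (va k) = a k from rfl, hs, tw_sum]
      rfl
    rw [heq]
    exact sum_mem fun j _ => smul_mem _ _ (subset_span (Set.mem_range_self j))
  have hspan := span_eq_span_mul_of_inclusions p c1 c2 hc1 hc2 va vb HH1 HH2
  obtain ⟨S, hS, hSrel⟩ :=
    exists_unit_matrix_of_span_eq va (fun j => tw p (c1 * untw p (vb j))) hspan
  refine ⟨c1, hc1, S, hS, ?_⟩
  have hcoeff : ∀ j, ∑ i, a i * S i j ^ p = c1 * b j := by
    intro j
    have h0 := hSrel j
    have h1 : tw p (c1 * b j) = tw p (∑ i, S i j ^ p * a i) := by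
      rw [show (tw p (c1 * b j) : Tw p F) = tw p (c1 * untw p (vb j)) from rfl, h0, tw_sum]
      rfl
    have h2 : c1 * b j = ∑ i, S i j ^ p * a i := congrArg (untw p) h1
    rw [h2]
    exact Finset.sum_congr rfl fun i _ => by ring
  intro x
  have hid : ∀ g : Fin n → F, (fun i => algebraMap F F (g i)) = g := by
    intro g
    funext i
    simp
  rw [show diagPForm p (fun i => algebraMap F F (a i)) (S.mulVec x)
      = ∑ i, a i * (S.mulVec x) i ^ p from by rw [hid]; rfl,
    show diagPForm p (fun i => algebraMap F F (b i)) x = ∑ i, b i * x i ^ p from by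
      rw [hid]; rfl]
  exact (diag_rel_iff p a b c1 S).mpr hcoeff x
end
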